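/- arXiv:2312.17062 — 6 statements merged into one kernel-verified Lean document; each statement's English description precedes it below -/
import Mathlib

section
/- If κ is a regular cardinal and (L,<_L) is a scattered linear order of cardinality κ, then either (κ,∈) or its reverse order (κ,∈*) embeds into (L,<_L). -/
noncomputable section
open Cardinal

/-- If every lower set `{z ≤ y}` of `M` is small but `M` is big, `κ` embeds in `M`. -/
lemma aux_exists_strictMono (κ : Cardinal.{0}) (hreg : κ.IsRegular) (M : Type) [LinearOrder M]
    (hbig : κ ≤ #M) (hbound : ∀ y : M, #{z : M | z ≤ y} < κ) :
    ∃ f : κ.ord.ToType → M, StrictMono f := by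
  set T := κ.ord.ToType
  have key : ∀ (a : T) (g : ∀ b : T, b < a → M), ∃ m : M, ∀ b (hb : b < a), g b hb < m := by
    intro a g
    set U : Set M := ⋃ b : Set.Iio a, {z : M | z ≤ g b.1 b.2}
    have hU : #U < κ := by
      refine lt_of_le_of_lt (Cardinal.mk_iUnion_le_sum_mk) ?_
      refine Cardinal.sum_lt_of_isRegular hreg ?_ (fun i => hbound _)
      exact Cardinal.mk_Iio_ord_toType a
    have : U ≠ Set.univ := by
      intro h
      rw [h, Cardinal.mk_univ] at hU
      exact absurd hbig (not_le.2 hU)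
    obtain ⟨m, hm⟩ : ∃ m, m ∉ U := by
      by_contra h
      push_neg at h
      exact this (Set.eq_univ_of_forall h)
    refine ⟨m, fun b hb => ?_⟩
    by_contra hle
    exact hm (Set.mem_iUnion.2 ⟨⟨b, hb⟩, not_lt.1 hle⟩)
  let F : ∀ a : T, (∀ b : T, b < a → M) → M := fun a g => (key a g).choose
  let f : T → M := (IsWellFounded.wf (r := ((· < ·) : T → T → Prop))).fix F
  have hf : ∀ a b : T, b < a → f b < f a := by
    intro a b hb
    have heq : f a = F a (fun b _ => f b) :=
      WellFounded.fix_eq (IsWellFounded.wf) F a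
    have := (key a (fun b _ => f b)).choose_spec b hb
    rw [heq]
    exact this
  exact ⟨f, fun a b h => hf b a h⟩

/-- Hausdorff: if `κ` is an infinite regular cardinal and `L` is a scattered linear order of
cardinality `κ`, then either `(κ,∈)` or its reverse embeds into `L`. -/
theorem stmt0 (κ : Cardinal.{0}) (hreg : κ.IsRegular) (L : Type) [LinearOrder L]
    (hcard : Cardinal.mk L = κ)
    (hscat : ¬ ∃ f : ℚ → L, StrictMono f) :
    (∃ f : κ.ord.ToType → L, StrictMono f) ∨ (∃ f : κ.ord.ToType → L, StrictAnti f) := by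
  by_contra hcon
  push_neg at hcon
  obtain ⟨hno1, hno2⟩ := hcon
  have haleph : Cardinal.aleph0 ≤ κ := hreg.aleph0_le
  -- the equivalence relation: small unordered interval
  set E : L → L → Prop := fun x y => #(Set.uIcc x y) < κ with hE
  have Erefl : ∀ x, E x x := by
    intro x
    simp only [hE, Set.uIcc_self, Cardinal.mk_singleton]
    exact lt_of_lt_of_le Cardinal.one_lt_aleph0 haleph
  have Esymm : ∀ {x y}, E x y → E y x := by
    intro x y h
    show #(Set.uIcc y x) < κ
    rwa [Set.uIcc_comm]
  have Etrans : ∀ {x y z}, E x y → E y z → E x z := by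
    intro x y z h1 h2
    have hsub : Set.uIcc x z ⊆ Set.uIcc x y ∪ Set.uIcc y z := Set.uIcc_subset_uIcc_union_uIcc
    calc #(Set.uIcc x z) ≤ #(Set.uIcc x y ∪ Set.uIcc y z : Set L) := Cardinal.mk_le_mk_of_subset hsub
      _ ≤ #(Set.uIcc x y) + #(Set.uIcc y z) := Cardinal.mk_union_le _ _
      _ < κ := Cardinal.add_lt_of_lt haleph h1 h2
  -- every class is small
  have hclass : ∀ x : L, #{y : L | E x y} < κ := by
    intro x
    by_contra hbig
    set A : Set L := {y : L | x ≤ y ∧ E x y} with hA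
    set B : Set L := {y : L | y ≤ x ∧ E x y} with hB
    have hsub : {y : L | E x y} ⊆ A ∪ B := by
      intro y hy
      rcases le_total x y with h | h
      · exact Or.inl ⟨h, hy⟩
      · exact Or.inr ⟨h, hy⟩
    have hAB : ¬ (#A < κ) ∨ ¬ (#B < κ) := by
      by_contra h
      push_neg at h
      exact hbig <| lt_of_le_of_lt
        ((Cardinal.mk_le_mk_of_subset hsub).trans (Cardinal.mk_union_le _ _))
        (Cardinal.add_lt_of_lt haleph h.1 h.2)
    rcases hAB with hAbig | hBbig
    · -- increasing sequence inside A
      have hbig' : κ ≤ #A := not_lt.1 hAbig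
      have hbound : ∀ y : ↥A, #{z : ↥A | z ≤ y} < κ := by
        intro y
        have hxy : x ≤ (y : L) := y.2.1
        have hinj : Function.Injective
            (fun z : {z : ↥A | z ≤ y} => (⟨(z : ↥A), by
              rw [Set.uIcc_of_le hxy]
              exact ⟨(z.1 : ↥A).2.1, Subtype.coe_le_coe.2 z.2⟩⟩ : Set.uIcc x (y : L))) := by
          intro a b hab
          have h1 := congrArg Subtype.val hab
          exact Subtype.ext (Subtype.ext h1)
        exact lt_of_le_of_lt (Cardinal.mk_le_of_injective hinj) y.2.2
      obtain ⟨f, hf⟩ := aux_exists_strictMono κ hreg ↥A (le_trans hbig' le_rfl) hbound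
      exact hno1 (fun t => (f t : L)) ((Subtype.strictMono_coe (· ∈ A)).comp hf)
    · -- decreasing sequence inside B
      have hbig' : κ ≤ #(↥B)ᵒᵈ := not_lt.1 hBbig
      have hbound : ∀ y : (↥B)ᵒᵈ, #{z : (↥B)ᵒᵈ | z ≤ y} < κ := by
        intro y
        have hyx : (OrderDual.ofDual y : ↥B).1 ≤ x := (OrderDual.ofDual y).2.1
        have hinj : Function.Injective
            (fun z : {z : (↥B)ᵒᵈ | z ≤ y} => (⟨((OrderDual.ofDual z.1 : ↥B) : L), by
              rw [Set.uIcc_comm, Set.uIcc_of_le hyx]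
              refine ⟨Subtype.coe_le_coe.2 ?_, (OrderDual.ofDual z.1 : ↥B).2.1⟩
              exact z.2⟩ : Set.uIcc x ((OrderDual.ofDual y : ↥B) : L))) := by
          intro a b hab
          have h1 := congrArg Subtype.val hab
          exact Subtype.ext (Subtype.ext h1)
        exact lt_of_le_of_lt (Cardinal.mk_le_of_injective hinj) (OrderDual.ofDual y).2.2
      obtain ⟨f, hf⟩ := aux_exists_strictMono κ hreg (↥B)ᵒᵈ hbig' hbound
      refine hno2 (fun t => ((OrderDual.ofDual (f t) : ↥B) : L)) ?_
      intro a b hab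
      exact Subtype.coe_lt_coe.2 (hf hab)
  -- the quotient setoid and representatives
  let s : Setoid L := ⟨E, ⟨Erefl, Esymm, Etrans⟩⟩
  let r : L → L := fun x => (Quotient.mk s x).out
  have hr : ∀ x, E (r x) x := fun x => Quotient.mk_out (s := s) x
  have hreq : ∀ {x y}, E x y → r x = r y := by
    intro x y h
    show (Quotient.mk s x).out = (Quotient.mk s y).out
    congr 1
    exact Quotient.sound h
  have hrr : ∀ x, r (r x) = r x := fun x => hreq (hr x)
  set S : Set L := Set.range r with hS
  -- points of S are pairwise inequivalent
  have hSne : ∀ a b : L, a ∈ S → b ∈ S → E a b → a = b := by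
    rintro a b ⟨xa, rfl⟩ ⟨xb, rfl⟩ h
    calc r xa = r (r xa) := (hrr xa).symm
      _ = r (r xb) := hreq h
      _ = r xb := hrr xb
  -- there are at least two classes
  have : Nonempty L := by
    rw [← Cardinal.mk_ne_zero_iff, hcard]
    exact hreg.pos.ne'
  obtain ⟨x₀⟩ := this
  have hnontriv : Nontrivial ↥S := by
    obtain ⟨y₀, hy₀⟩ : ∃ y₀ : L, ¬ E x₀ y₀ := by
      by_contra h
      push_neg at h
      have : (Set.univ : Set L) ⊆ {y : L | E x₀ y} := fun y _ => h y
      have := Cardinal.mk_le_mk_of_subset this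
      rw [Cardinal.mk_univ, hcard] at this
      exact absurd (hclass x₀) (not_lt.2 this)
    refine ⟨⟨r x₀, ⟨x₀, rfl⟩⟩, ⟨r y₀, ⟨y₀, rfl⟩⟩, ?_⟩
    intro h
    have : r x₀ = r y₀ := congrArg Subtype.val h
    exact hy₀ (Etrans (Esymm (hr x₀)) (this ▸ hr y₀))
  -- S is densely ordered
  have hdense : DenselyOrdered ↥S := by
    constructor
    rintro ⟨a, ha⟩ ⟨b, hb⟩ hab
    have hab' : a < b := hab
    have hnE : ¬ E a b := fun h => absurd (hSne a b ha hb h) (ne_of_lt hab')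
    have hbigI : κ ≤ #(Set.Icc a b) := by
      rw [← Set.uIcc_of_le hab'.le]
      exact not_lt.1 hnE
    obtain ⟨z, hz, hza, hzb⟩ : ∃ z ∈ Set.Icc a b, ¬ E a z ∧ ¬ E b z := by
      by_contra h
      push_neg at h
      have hsub : Set.Icc a b ⊆ {y : L | E a y} ∪ {y : L | E b y} := by
        intro z hz
        by_cases hEa : E a z
        · exact Or.inl hEa
        · exact Or.inr (h z hz hEa)
      have := lt_of_le_of_lt
        ((Cardinal.mk_le_mk_of_subset hsub).trans (Cardinal.mk_union_le _ _))
        (Cardinal.add_lt_of_lt haleph (hclass a) (hclass b))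
      exact absurd hbigI (not_le.2 this)
    have hz1 : a < z := lt_of_le_of_ne hz.1 (fun h => hza (by rw [← h]; exact Erefl a))
    have hz2 : z < b := lt_of_le_of_ne hz.2 (fun h => hzb (by rw [h]; exact Erefl b))
    refine ⟨⟨r z, ⟨z, rfl⟩⟩, ?_, ?_⟩
    · show a < r z
      by_contra h
      push_neg at h
      -- r z ≤ a < z, so a ∈ [r z, z], hence uIcc a z ⊆ uIcc (r z) z
      have hsub : Set.uIcc a z ⊆ Set.uIcc (r z) z := by
        rw [Set.uIcc_of_le (h.trans hz1.le), Set.uIcc_of_le hz1.le]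
        exact Set.Icc_subset_Icc h le_rfl
      exact hza (lt_of_le_of_lt (Cardinal.mk_le_mk_of_subset hsub) (hr z))
    · show r z < b
      by_contra h
      push_neg at h
      have hsub : Set.uIcc b z ⊆ Set.uIcc (r z) z := by
        rw [Set.uIcc_comm b z, Set.uIcc_of_le hz2.le, Set.uIcc_comm (r z) z,
          Set.uIcc_of_le (hz2.le.trans h)]
        exact Set.Icc_subset_Icc le_rfl h
      exact hzb (lt_of_le_of_lt (Cardinal.mk_le_mk_of_subset hsub) (hr z))
  haveI := hdense
  haveI := hnontriv
  obtain ⟨e⟩ := Order.embedding_from_countable_to_dense (α := ℚ) (β := ↥S)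
  exact hscat ⟨fun q => ((e q : ↥S) : L), (Subtype.strictMono_coe (· ∈ S)).comp e.strictMono⟩
end
end

section
/- Suppose T ⊆ {}^{<κ}ω is a uniformly ϱ-coherent κ-Aronszajn tree. Then for all s ∈ T with dom(s) a successor (non-limit) ordinal and all i < ω, there exists a map φ : T_{[s]} → T_{[s,i]} which preserves the lexicographic order and preserves incompatibility in the tree order ⊆. -/
noncomputable section
open Cardinal Set

/-- A node of a streamlined tree: a partial function from ordinals to `ℕ`,
encoded as an `Option ℕ`-valued function; its domain is meant to be an ordinal. -/
abbrev ONode : Type 1 := Ordinal → Option ℕ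

/-- `t` has domain exactly the ordinal `α`. -/
def nodeDom (t : ONode) (α : Ordinal) : Prop := ∀ γ, (t γ).isSome ↔ γ < α

/-- The restriction `t ↾ β`. -/
def nrestrict (t : ONode) (β : Ordinal) : ONode := fun γ => if γ < β then t γ else none

/-- `nExt t s` says that `s` extends `t`, i.e. `t ⊆ s` as functions. -/
def nExt (t s : ONode) : Prop := ∀ γ, (t γ).isSome → s γ = t γ

/-- Incompatibility of two nodes in the tree order `⊆`. -/
def nIncomp (s t : ONode) : Prop := ¬ nExt s t ∧ ¬ nExt t s

/-- The `α`-th level of `T`. -/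
def levelSet (T : Set ONode) (α : Ordinal) : Set ONode := {t ∈ T | nodeDom t α}

/-- `T ⊆ {}^{<κ}ω` is a streamlined `κ`-tree. -/
structure IsStreamTree (κ : Cardinal.{0}) (T : Set ONode) : Prop where
  hdom : ∀ t ∈ T, ∃ α < κ.ord, nodeDom t α
  down : ∀ t ∈ T, ∀ β, nrestrict t β ∈ T
  level_ne : ∀ α < κ.ord, (levelSet T α).Nonempty
  level_small : ∀ α < κ.ord, Cardinal.mk ↥(levelSet T α) < Cardinal.lift.{1} κ

/-- The lexicographic (strict) order on nodes: `s <_lex t` iff `s ⊊ t`, or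
`s(Δ) < t(Δ)` at the least point `Δ` of disagreement. -/
def lexLT (s t : ONode) : Prop :=
  (nExt s t ∧ s ≠ t) ∨
  ∃ Δ m n, (∀ γ < Δ, s γ = t γ) ∧ s Δ = some m ∧ t Δ = some n ∧ m < n

/-- `T` has a chain (branch) of size `κ`. -/
def HasKappaBranch (κ : Cardinal.{0}) (T : Set ONode) : Prop :=
  ∃ B ⊆ T, (∀ s ∈ B, ∀ t ∈ B, nExt s t ∨ nExt t s) ∧
    Cardinal.lift.{1} κ ≤ Cardinal.mk ↥B

/-- A `ϱ`-modification: a finitely supported integer correction term, whose support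
is a finite set of non-limit ordinals below `κ` containing `0`. -/
structure RhoMod (κ : Cardinal.{0}) where
  x : Finset Ordinal
  zero_mem : (0 : Ordinal) ∈ x
  mem_nacc : ∀ β ∈ x, β < κ.ord ∧ ¬ Order.IsSuccLimit β
  f : Ordinal → ℤ

/-- `max (dom η ∩ (β+1))`: the largest point of the support of `η` that is `≤ β`. -/
def RhoMod.anchor {κ : Cardinal.{0}} (η : RhoMod κ) (β : Ordinal) : Ordinal :=
  (η.x.filter (· ≤ β)).max' ⟨0, Finset.mem_filter.2 ⟨η.zero_mem, zero_le (a := β)⟩⟩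

/-- `η * τ` is everywhere defined (takes values in `ω`). -/
def rhoDefined {κ : Cardinal.{0}} (η : RhoMod κ) (t : ONode) : Prop :=
  ∀ γ n, t γ = some n → 0 ≤ η.f (η.anchor γ) + (n : ℤ)

/-- The action `η * t` of a `ϱ`-modification on a node. -/
def rhoAct {κ : Cardinal.{0}} (η : RhoMod κ) (t : ONode) : ONode :=
  fun γ => (t γ).map fun n => (η.f (η.anchor γ) + (n : ℤ)).toNat

/-- `T` is `ϱ`-uniform: closed under all (defined) `ϱ`-modifications. -/
def RhoUniform (κ : Cardinal.{0}) (T : Set ONode) : Prop :=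
  ∀ t ∈ T, ∀ η : RhoMod κ, rhoDefined η t → rhoAct η t ∈ T

/-- `T` is `ϱ`-coherent: any two nodes on a common level are `ϱ`-modifications of each other. -/
def RhoCoherent (κ : Cardinal.{0}) (T : Set ONode) : Prop :=
  ∀ α < κ.ord, ∀ s ∈ levelSet T α, ∀ t ∈ levelSet T α,
    ∃ η : RhoMod κ, rhoDefined η t ∧ rhoAct η t = s

/-- The cone `T_{[s]}`. -/
def cone (T : Set ONode) (s : ONode) : Set ONode := {t ∈ T | nExt t s ∨ nExt s t}

/-- The frozen cone `T_{[s,i]}`. -/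
def frozenCone (T : Set ONode) (s : ONode) (i : ℕ) : Set ONode :=
  {t ∈ T | nExt t s ∨ (nExt s t ∧ ∀ ξ n, ¬ (s ξ).isSome → t ξ = some n → i ≤ n)}

lemma nodeDom_unique {t : ONode} {α β : Ordinal} (h1 : nodeDom t α) (h2 : nodeDom t β) :
    α = β := by
  by_contra hne
  rcases lt_or_gt_of_ne hne with h | h
  · exact absurd ((h1 α).mp ((h2 α).mpr h)) (lt_irrefl α)
  · exact absurd ((h2 β).mp ((h1 β).mpr h)) (lt_irrefl β)

/-- For `s ∈ T` of successor (non-limit) height and `i < ω`, there is a map from the cone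
`T_{[s]}` to the frozen cone `T_{[s,i]}` preserving `<_lex` and incompatibility. -/
theorem stmt6 (κ : Cardinal.{0}) (hreg : κ.IsRegular) (hunc : Cardinal.aleph0 < κ)
    (T : Set ONode) (hT : IsStreamTree κ T)
    (hAron : ¬ HasKappaBranch κ T)
    (huni : RhoUniform κ T) (hcoh : RhoCoherent κ T)
    (s : ONode) (hs : s ∈ T) (α : Ordinal) (hsdom : nodeDom s α) (hsucc : ¬ Order.IsSuccLimit α)
    (i : ℕ) :
    ∃ φ : ↥(cone T s) → ↥(frozenCone T s i),
      (∀ a b : ↥(cone T s), lexLT a.1 b.1 → lexLT (φ a).1 (φ b).1) ∧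
      (∀ a b : ↥(cone T s), nIncomp a.1 b.1 → nIncomp (φ a).1 (φ b).1) := by
  classical
  have hακ : α < κ.ord := by
    obtain ⟨α', hα', hd⟩ := hT.hdom s hs
    rwa [nodeDom_unique hsdom hd]
  have h0κ : (0 : Ordinal) < κ.ord := by
    have h1 : (0 : Cardinal) < κ := lt_trans Cardinal.aleph0_pos hunc
    simpa using Cardinal.ord_lt_ord.mpr h1
  have hmem : ∀ β ∈ ({0, α} : Finset Ordinal), β < κ.ord ∧ ¬ Order.IsSuccLimit β := by
    intro β hβ
    rcases Finset.mem_insert.mp hβ with rfl | hβ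
    · exact ⟨h0κ, Ordinal.not_isSuccLimit_zero⟩
    · rw [Finset.mem_singleton] at hβ
      subst hβ
      exact ⟨hακ, hsucc⟩
  set c : Ordinal → ℤ := fun γ => if γ < α then 0 else (i : ℤ) with hcdef
  obtain ⟨η, hηx, hηf⟩ : ∃ η : RhoMod κ, η.x = {0, α} ∧ η.f = c :=
    ⟨⟨{0, α}, by simp, hmem, c⟩, rfl, rfl⟩
  have hc : ∀ γ, 0 ≤ c γ := by
    intro γ; simp only [hcdef]; split <;> positivity
  have hf : ∀ γ, η.f (η.anchor γ) = c γ := by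
    intro γ
    have hm : η.anchor γ ∈ η.x.filter (· ≤ γ) := Finset.max'_mem _ _
    rw [Finset.mem_filter, hηx] at hm
    obtain ⟨hmx, hle⟩ := hm
    rw [hηf]
    rcases lt_or_ge γ α with h | h
    · have h0 : η.anchor γ = 0 := by
        rcases Finset.mem_insert.mp hmx with h0 | hα'
        · exact h0
        · rw [Finset.mem_singleton] at hα'
          exact absurd (hα' ▸ hle) (not_le.2 h)
      rw [h0]
      simp only [hcdef]
      rw [if_pos ((zero_le (a := γ)).trans_lt h), if_pos h]
    · have hαle : α ≤ η.anchor γ :=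
        Finset.le_max' (η.x.filter (· ≤ γ)) α (Finset.mem_filter.2 ⟨by rw [hηx]; simp, h⟩)
      simp only [hcdef]
      rw [if_neg (not_lt.2 hαle), if_neg (not_lt.2 h)]
  have hact : ∀ (t : ONode) γ, rhoAct η t γ = (t γ).map fun n : ℕ => (c γ + (n : ℤ)).toNat := by
    intro t γ
    unfold rhoAct
    rw [hf]
    cases t γ <;> rfl
  have hdef : ∀ t : ONode, rhoDefined η t := by
    intro t γ n _
    rw [hf]
    have := hc γ
    omega
  have hsome : ∀ (t : ONode) γ n, t γ = some n → rhoAct η t γ = some (c γ + n).toNat := by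
    intro t γ n h; rw [hact, h]; rfl
  have hnone : ∀ (t : ONode) γ, t γ = none → rhoAct η t γ = none := by
    intro t γ h; rw [hact, h]; rfl
  have hisSome : ∀ (t : ONode) γ, (rhoAct η t γ).isSome ↔ (t γ).isSome := by
    intro t γ; rw [hact]; cases t γ <;> simp
  have hext : ∀ a b : ONode, nExt a b ↔ nExt (rhoAct η a) (rhoAct η b) := by
    intro a b
    constructor
    · intro h γ hγ
      rw [hisSome] at hγ
      obtain ⟨m, hm⟩ := Option.isSome_iff_exists.mp hγ
      have hsm : (a γ).isSome := by rw [hm]; rfl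
      rw [hsome a γ m hm, hsome b γ m ((h γ hsm).trans hm)]
    · intro h γ hγ
      obtain ⟨m, hm⟩ := Option.isSome_iff_exists.mp hγ
      have h1 := hsome a γ m hm
      have h2 := h γ (by rw [h1]; rfl)
      rw [h1, hact] at h2
      cases hb : b γ with
      | none => rw [hb] at h2; simp at h2
      | some n =>
        rw [hb] at h2
        simp only [Option.map_some] at h2
        have hcn := hc γ
        have hnm : n = m := by
          have := Option.some.inj h2
          omega
        rw [hm, hnm]
  have hmemFC : ∀ t ∈ cone T s, rhoAct η t ∈ frozenCone T s i := by
    intro t ht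
    obtain ⟨htT, hts⟩ := ht
    refine ⟨huni t htT η (hdef t), ?_⟩
    rcases hts with h | h
    · left
      have heq : rhoAct η t = t := by
        funext γ
        cases hg : t γ with
        | none => exact hnone t γ hg
        | some m =>
          have hsγ : s γ = some m := (h γ (by rw [hg]; rfl)).trans hg
          have hγα : γ < α := (hsdom γ).mp (by rw [hsγ]; rfl)
          rw [hsome t γ m hg]
          have hc0 : c γ = 0 := by simp only [hcdef]; rw [if_pos hγα]
          rw [hc0]
          congr 1
          omega
      rw [heq]; exact h
    · right
      constructor
      · intro γ hγ
        have hγα : γ < α := (hsdom γ).mp hγ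
        obtain ⟨m, hm⟩ := Option.isSome_iff_exists.mp hγ
        have htγ : t γ = some m := (h γ hγ).trans hm
        rw [hsome t γ m htγ, hm]
        have hc0 : c γ = 0 := by simp only [hcdef]; rw [if_pos hγα]
        rw [hc0]
        congr 1
        omega
      · intro ξ n hξ hn
        have hξα : ¬ ξ < α := fun hh => hξ ((hsdom ξ).mpr hh)
        rw [hact] at hn
        cases htξ : t ξ with
        | none => rw [htξ] at hn; simp at hn
        | some m =>
          rw [htξ] at hn
          simp only [Option.map_some] at hn
          have hni : n = (c ξ + m).toNat := (Option.some.inj hn).symm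
          have hcξ : c ξ = i := by simp only [hcdef]; rw [if_neg hξα]
          omega
  refine ⟨fun t => ⟨rhoAct η t.1, hmemFC t.1 t.2⟩, ?_, ?_⟩
  · rintro ⟨a, ha⟩ ⟨b, hb⟩ hab
    dsimp only at hab ⊢
    rcases hab with ⟨he, hne⟩ | ⟨Δ, m, n, hagree, ham, hbn, hmn⟩
    · left
      refine ⟨(hext a b).mp he, ?_⟩
      intro hcontra
      have hex : ∃ γ, a γ ≠ b γ := by
        by_contra hn2
        push_neg at hn2
        exact hne (funext hn2)
      obtain ⟨γ, hγ⟩ := hex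
      cases hag : a γ with
      | some m =>
        exact hγ (he γ (by rw [hag]; rfl)).symm
      | none =>
        have hbs : (b γ).isSome := by
          cases hbg : b γ with
          | none => exact absurd (hag.trans hbg.symm) hγ
          | some k => rfl
        have h1 : rhoAct η a γ = none := hnone a γ hag
        have h2 : (rhoAct η b γ).isSome := (hisSome b γ).mpr hbs
        rw [← hcontra, h1] at h2
        simp at h2
    · right
      refine ⟨Δ, (c Δ + m).toNat, (c Δ + n).toNat, ?_, hsome a Δ m ham, hsome b Δ n hbn, ?_⟩
      · intro γ hγ
        rw [hact, hact, hagree γ hγ]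
      · have := hc Δ; omega
  · rintro ⟨a, ha⟩ ⟨b, hb⟩ ⟨h1, h2⟩
    dsimp only at h1 h2 ⊢
    exact ⟨fun h => h1 ((hext a b).mpr h), fun h => h2 ((hext b a).mpr h)⟩
end
end

section
/- Suppose ⟨D_α : α < κ⟩ witnesses P⁻(κ,2,⊑,κ). Define C_0 = ∅, C_{β+1} = {β}, for α = ω·β with β a successor ordinal let C_α be any cofinal subset of α of order type ω, and for α = ω·β with β a limit ordinal let C_α = {ω·γ : γ ∈ D_β}. Then ⟨C_α : α < κ⟩ satisfies: (1) for limit α, C_α is club in α; (2) if ᾱ ∈ acc(C_α) then C_ᾱ = C_α ∩ ᾱ; (3) {α < κ : otp(C_α) = ω} is cofinal in κ; and (5) for every sequence ⟨B_i : i < κ⟩ of cofinal subsets of the limit ordinals below κ, there are stationarily many α < κ such that sup(nacc(C_α) ∩ B_i) = α for every i < α. -/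
noncomputable section
open Cardinal Set

/-- `acc(C)`: the accumulation points of `C` belonging to `C`. -/
def accOf (C : Set Ordinal) : Set Ordinal := {β ∈ C | 0 < β ∧ sSup (C ∩ Set.Iio β) = β}

/-- `nacc(C) = C \ acc(C)`. -/
def naccOf (C : Set Ordinal) : Set Ordinal := C \ accOf C

/-- `C` is a club (closed unbounded) subset of `α`. -/
def ClubIn (C : Set Ordinal) (α : Ordinal) : Prop :=
  C ⊆ Set.Iio α ∧ (∀ β < α, ∃ γ ∈ C, β ≤ γ) ∧
    ∀ β < α, 0 < β → sSup (C ∩ Set.Iio β) = β → β ∈ C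

/-- `S` is stationary in `α`. -/
def StatIn (S : Set Ordinal) (α : Ordinal) : Prop :=
  ∀ D, ClubIn D α → (S ∩ D).Nonempty

namespace Stmt10Aux

open Ordinal

lemma ord_lt_add_one (x : Ordinal) : x < x + 1 := by
  rw [Ordinal.add_one_eq_succ]; exact Order.lt_succ x

lemma mk_succLimit {a : Ordinal} (h0 : a ≠ 0) (h : ∀ x < a, Order.succ x < a) :
    Order.IsSuccLimit a :=
  Ordinal.isSuccLimit_iff.2 ⟨h0, Order.isSuccPrelimit_of_succ_lt h⟩

lemma omul_cancel {a b : Ordinal} (h : omega0 * a = omega0 * b) : a = b := by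
  rcases lt_trichotomy a b with hl | he | hl
  · exact absurd h (ne_of_lt ((mul_lt_mul_iff_right₀ omega0_pos).2 hl))
  · exact he
  · exact absurd h.symm (ne_of_lt ((mul_lt_mul_iff_right₀ omega0_pos).2 hl))

lemma omul_inj : Function.Injective (fun γ : Ordinal => omega0 * γ) :=
  fun _ _ h => omul_cancel h

/-- If a nonempty-sup argument: sup of a set contained strictly below β equals β gives
unboundedness. -/
lemma unbdd_of_sSup_eq {S : Set Ordinal} {β x : Ordinal} (hS : ∀ s ∈ S, s < β)
    (h : sSup S = β) (hβ : 0 < β) (hx : x < β) : ∃ s ∈ S, x < s := by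
  rcases S.eq_empty_or_nonempty with rfl | hne
  · rw [csSup_empty] at h
    exact absurd h.symm (ne_of_gt hβ)
  · by_contra hc
    push_neg at hc
    have : sSup S ≤ x := csSup_le hne hc
    exact absurd (h ▸ this) (not_le.2 hx)

lemma sSup_eq_of_between {T U : Set Ordinal} {β : Ordinal} (hTU : T ⊆ U)
    (hU : U ⊆ Set.Iio β) (hT : sSup T = β) (hβ : 0 < β) : sSup U = β := by
  have hne : T.Nonempty := by
    rcases T.eq_empty_or_nonempty with rfl | hne
    · rw [csSup_empty] at hT
      exact absurd hT.symm (ne_of_gt hβ)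
    · exact hne
  apply le_antisymm
  · exact csSup_le (hne.mono hTU) fun x hx => (hU hx).le
  · calc β = sSup T := hT.symm
      _ ≤ sSup U := csSup_le_csSup ⟨β, fun x hx => (hU hx).le⟩ hne hTU

lemma omul_sSup {S : Set Ordinal} (hne : S.Nonempty) (hbd : BddAbove S) :
    sSup ((fun γ => omega0 * γ) '' S) = omega0 * sSup S := by
  obtain ⟨b, hb⟩ := hbd
  have hbd' : BddAbove ((fun γ => omega0 * γ) '' S) := by
    refine ⟨omega0 * b, ?_⟩
    rintro x ⟨γ, hγ, rfl⟩
    exact mul_le_mul_right (hb hγ) _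
  apply le_antisymm
  · apply csSup_le (hne.image _)
    rintro x ⟨γ, hγ, rfl⟩
    exact mul_le_mul_right (le_csSup ⟨b, hb⟩ hγ) _
  · by_cases hmem : sSup S ∈ S
    · exact le_csSup hbd' ⟨_, hmem, rfl⟩
    · have hpos : sSup S ≠ 0 := by
        intro h0
        obtain ⟨γ, hγ⟩ := hne
        have : γ ≤ sSup S := le_csSup ⟨b, hb⟩ hγ
        rw [h0, nonpos_iff_eq_zero] at this
        exact hmem (by rw [h0, ← this]; exact hγ)
      have hlim : Order.IsSuccLimit (sSup S) := by
        refine mk_succLimit hpos fun x hx => ?_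
        have : ∃ γ ∈ S, x < γ := by
          by_contra hc
          push_neg at hc
          exact absurd (csSup_le hne hc) (not_le.2 hx)
        obtain ⟨γ, hγ, hxγ⟩ := this
        have hγlt : γ < sSup S := lt_of_le_of_ne (le_csSup ⟨b, hb⟩ hγ)
          (fun h => hmem (h ▸ hγ))
        exact lt_of_le_of_lt (Order.succ_le_of_lt hxγ) hγlt
      rw [mul_le_iff_of_isSuccLimit hlim]
      intro x hx
      have : ∃ γ ∈ S, x < γ := by
        by_contra hc
        push_neg at hc
        exact absurd (csSup_le hne hc) (not_le.2 hx)
      obtain ⟨γ, hγ, hxγ⟩ := this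
      exact le_trans (mul_le_mul_right hxγ.le _) (le_csSup hbd' ⟨_, hγ, rfl⟩)

lemma omul_image_inter_Iio (S : Set Ordinal) (γ : Ordinal) :
    ((fun x => omega0 * x) '' S) ∩ Set.Iio (omega0 * γ) =
      (fun x => omega0 * x) '' (S ∩ Set.Iio γ) := by
  ext x
  constructor
  · rintro ⟨⟨y, hy, rfl⟩, hlt⟩
    exact ⟨y, ⟨hy, (mul_lt_mul_iff_right₀ omega0_pos).1 hlt⟩, rfl⟩
  · rintro ⟨y, ⟨hy, hlt⟩, rfl⟩
    exact ⟨⟨y, hy, rfl⟩, (mul_lt_mul_iff_right₀ omega0_pos).2 hlt⟩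

lemma acc_omul (S : Set Ordinal) :
    accOf ((fun x => omega0 * x) '' S) = (fun x => omega0 * x) '' accOf S := by
  ext x
  constructor
  · rintro ⟨⟨γ, hγ, rfl⟩, hpos, hsup⟩
    have hγ0 : 0 < γ := by
      rw [pos_iff_ne_zero]
      rintro rfl
      simp at hpos
    rw [omul_image_inter_Iio] at hsup
    have hne : (S ∩ Set.Iio γ).Nonempty := by
      rcases (S ∩ Set.Iio γ).eq_empty_or_nonempty with he | hne
      · rw [he, Set.image_empty, csSup_empty] at hsup
        exact absurd hsup.symm (ne_of_gt hpos)
      · exact hne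
    have hbd : BddAbove (S ∩ Set.Iio γ) := ⟨γ, fun y hy => hy.2.le⟩
    rw [omul_sSup hne hbd] at hsup
    exact ⟨γ, ⟨hγ, hγ0, omul_cancel hsup⟩, rfl⟩
  · rintro ⟨γ, ⟨hγ, hγ0, hsup⟩, rfl⟩
    refine ⟨⟨γ, hγ, rfl⟩, by simpa using (mul_lt_mul_iff_right₀ omega0_pos).2 hγ0, ?_⟩
    rw [omul_image_inter_Iio]
    have hne : (S ∩ Set.Iio γ).Nonempty := by
      rcases (S ∩ Set.Iio γ).eq_empty_or_nonempty with he | hne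
      · rw [he, csSup_empty] at hsup
        exact absurd hsup.symm (ne_of_gt hγ0)
      · exact hne
    have hbd : BddAbove (S ∩ Set.Iio γ) := ⟨γ, fun y hy => hy.2.le⟩
    rw [omul_sSup hne hbd, hsup]

lemma nacc_omul (S : Set Ordinal) :
    naccOf ((fun x => omega0 * x) '' S) = (fun x => omega0 * x) '' naccOf S := by
  unfold naccOf
  rw [acc_omul, ← Set.image_diff omul_inj]

lemma omul_lt_ord {κ : Cardinal.{0}} (hunc : Cardinal.aleph0 < κ) {γ : Ordinal}
    (hγ : γ < κ.ord) : omega0 * γ < κ.ord := by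
  rw [Cardinal.lt_ord] at hγ ⊢
  rw [Ordinal.card_mul, Ordinal.card_omega0]
  exact Cardinal.mul_lt_of_lt hunc.le hunc hγ

lemma limit_eq_omul {α : Ordinal} (h : Order.IsSuccLimit α) :
    ∃ q : Ordinal, 0 < q ∧ α = omega0 * q := by
  have hdm := Ordinal.div_add_mod α omega0
  have hml : α % omega0 < omega0 := Ordinal.mod_lt α omega0_ne_zero
  obtain ⟨n, hn⟩ := Ordinal.lt_omega0.1 hml
  set q := α / omega0 with hq
  cases n with
  | zero =>
    rw [hn, Nat.cast_zero, add_zero] at hdm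
    refine ⟨q, ?_, hdm.symm⟩
    rw [pos_iff_ne_zero]
    intro h0
    rw [h0, mul_zero] at hdm
    exact h.ne_zero hdm.symm
  | succ m =>
    exfalso
    rw [hn] at hdm
    have heq : (omega0 * q + m) + 1 = α := by
      rw [← hdm]
      push_cast
      rw [add_assoc]
    have hlt : omega0 * q + m < α := by
      rw [← heq]; exact ord_lt_add_one _
    have hsl := h.succ_lt hlt
    rw [← Ordinal.add_one_eq_succ, heq] at hsl
    exact absurd hsl (lt_irrefl α)

lemma no_acc_sSup {f : ℕ → Ordinal} (hf : StrictMono f) {β : Ordinal} (h0 : 0 < β)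
    (hcof : ∃ n, β ≤ f n) : sSup (Set.range f ∩ Set.Iio β) ≠ β := by
  classical
  intro hsup
  set N := Nat.find hcof with hN
  have hNle : β ≤ f N := Nat.find_spec hcof
  have hNmin : ∀ k < N, f k < β := fun k hk => not_le.1 (Nat.find_min hcof hk)
  cases hNN : N with
  | zero =>
    have : Set.range f ∩ Set.Iio β = ∅ := by
      ext x
      simp only [Set.mem_inter_iff, Set.mem_range, Set.mem_Iio, Set.mem_empty_iff_false,
        iff_false, not_and]
      rintro ⟨n, rfl⟩
      intro hlt
      have : f n < f N := lt_of_lt_of_le hlt hNle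
      have := hf.lt_iff_lt.1 this
      omega
    rw [this, csSup_empty] at hsup
    exact absurd hsup.symm (ne_of_gt h0)
  | succ m =>
    have hfm : f m < β := hNmin m (by omega)
    have hbound : ∀ x ∈ Set.range f ∩ Set.Iio β, x ≤ f m := by
      rintro x ⟨⟨n, rfl⟩, hlt⟩
      have hn : n < N := by
        by_contra hge
        push_neg at hge
        exact absurd (lt_of_lt_of_le hlt (hNle.trans (hf.monotone hge))) (lt_irrefl _)
      exact hf.monotone (by omega)
    have hne : (Set.range f ∩ Set.Iio β).Nonempty :=
      ⟨f m, Set.mem_range_self m, hfm⟩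
    have : β ≤ f m := hsup ▸ csSup_le hne hbound
    exact absurd (lt_of_le_of_lt this hfm) (lt_irrefl β)

lemma club_inter_omul_fixed {κ : Cardinal.{0}} (hreg : κ.IsRegular)
    (hunc : Cardinal.aleph0 < κ) {E : Set Ordinal} (hE : ClubIn E κ.ord) :
    ClubIn (E ∩ {α | 0 < α ∧ omega0 * α = α}) κ.ord := by
  obtain ⟨hEsub, hEunb, hEcl⟩ := hE
  have hκlim : Order.IsSuccLimit κ.ord := Cardinal.isSuccLimit_ord hreg.aleph0_le
  refine ⟨fun x hx => hEsub hx.1, ?_, ?_⟩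
  · -- unbounded
    intro β hβ
    have hnext : ∀ p, p < κ.ord → ∃ e ∈ E, omega0 * p + 1 ≤ e := by
      intro p hp
      have h1 : omega0 * p + 1 < κ.ord := by
        rw [Ordinal.add_one_eq_succ]
        exact hκlim.succ_lt (omul_lt_ord hunc hp)
      exact hEunb _ h1
    classical
    let next : Ordinal → Ordinal := fun p =>
      if h : p < κ.ord then (hnext p h).choose else 0
    let g : ℕ → Ordinal := fun n => Nat.rec (β + 1) (fun _ ih => next ih) n
    have hg0 : g 0 = β + 1 := rfl
    have hgsucc : ∀ n, g (n + 1) = next (g n) := fun n => rfl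
    have hglt : ∀ n, g n < κ.ord := by
      intro n
      induction n with
      | zero =>
        rw [hg0, Ordinal.add_one_eq_succ]
        exact hκlim.succ_lt hβ
      | succ n ih =>
        rw [hgsucc, show next (g n) = (hnext (g n) ih).choose from dif_pos ih]
        exact hEsub (hnext (g n) ih).choose_spec.1
    have hgE : ∀ n, g (n + 1) ∈ E := by
      intro n
      rw [hgsucc, show next (g n) = (hnext (g n) (hglt n)).choose from dif_pos (hglt n)]
      exact (hnext (g n) (hglt n)).choose_spec.1
    have hgstep : ∀ n, omega0 * g n + 1 ≤ g (n + 1) := by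
      intro n
      rw [hgsucc, show next (g n) = (hnext (g n) (hglt n)).choose from dif_pos (hglt n)]
      exact (hnext (g n) (hglt n)).choose_spec.2
    have hgmono : StrictMono g := by
      apply strictMono_nat_of_lt_succ
      intro n
      calc g n ≤ omega0 * g n := le_mul_right _ omega0_pos
        _ < omega0 * g n + 1 := ord_lt_add_one _
        _ ≤ g (n + 1) := hgstep n
    set s := ⨆ n, g n with hs
    have hbdg : BddAbove (Set.range g) := Ordinal.bddAbove_range g
    have hgle : ∀ n, g n ≤ s := fun n => le_ciSup hbdg n
    have hglts : ∀ n, g n < s := fun n => lt_of_lt_of_le (hgmono (Nat.lt_succ_self n)) (hgle (n + 1))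
    have hsκ : s < κ.ord := by
      apply Ordinal.iSup_lt_ord _ hglt
      rw [Cardinal.IsRegular.cof_eq hreg, Cardinal.mk_nat]
      exact hunc
    have hsx : ∀ x, x < s → ∃ n, x < g n := by
      intro x hx
      rw [hs, lt_ciSup_iff hbdg] at hx
      exact hx
    have hslim : Order.IsSuccLimit s := by
      refine mk_succLimit (fun h0 => ?_) (fun x hx => ?_)
      · exact not_lt_zero (h0 ▸ hglts 0)
      · obtain ⟨n, hn⟩ := hsx x hx
        exact lt_of_le_of_lt (Order.succ_le_of_lt hn) (hglts n)
    have hsE : s ∈ E := by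
      apply hEcl s hsκ hslim.pos
      apply le_antisymm
      · exact csSup_le ⟨g 1, hgE 0, hglts 1⟩ fun x hx => hx.2.le
      · by_contra hlt
        push_neg at hlt
        obtain ⟨n, hn⟩ := hsx _ hlt
        have hle : g (n + 1) ≤ sSup (E ∩ Set.Iio s) :=
          le_csSup ⟨s, fun x hx => hx.2.le⟩ ⟨hgE n, hglts (n + 1)⟩
        exact absurd (lt_of_lt_of_le hn ((hgmono (Nat.lt_succ_self n)).le.trans hle))
          (lt_irrefl _)
    have hsfix : omega0 * s = s := by
      apply le_antisymm
      · rw [mul_le_iff_of_isSuccLimit hslim]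
        intro x hx
        obtain ⟨n, hn⟩ := hsx x hx
        calc omega0 * x ≤ omega0 * g n := mul_le_mul_right hn.le _
          _ ≤ omega0 * g n + 1 := le_self_add
          _ ≤ g (n + 1) := hgstep n
          _ ≤ s := hgle (n + 1)
      · exact le_mul_right s omega0_pos
    refine ⟨s, ⟨hsE, hslim.pos, hsfix⟩, ?_⟩
    calc β ≤ β + 1 := le_self_add
      _ = g 0 := hg0.symm
      _ ≤ s := hgle 0
  · -- closed
    intro β hβ hβ0 hsup
    set T := (E ∩ {α | 0 < α ∧ omega0 * α = α}) ∩ Set.Iio β with hT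
    have hTsub : ∀ s ∈ T, s < β := fun s hs => hs.2
    have hunbd : ∀ x < β, ∃ t ∈ T, x < t := fun x hx =>
      unbdd_of_sSup_eq hTsub hsup hβ0 hx
    have hβlim : Order.IsSuccLimit β := by
      refine mk_succLimit (ne_of_gt hβ0) fun x hx => ?_
      obtain ⟨t, ht, hxt⟩ := hunbd x hx
      exact lt_of_le_of_lt (Order.succ_le_of_lt hxt) (ht.2)
    have hβE : β ∈ E := by
      apply hEcl β hβ hβ0
      exact sSup_eq_of_between (T := T) (U := E ∩ Set.Iio β)
        (fun t ht => ⟨ht.1.1, ht.2⟩) (fun x hx => hx.2) hsup hβ0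
    have hβfix : omega0 * β = β := by
      apply le_antisymm
      · rw [mul_le_iff_of_isSuccLimit hβlim]
        intro x hx
        obtain ⟨t, ht, hxt⟩ := hunbd x hx
        calc omega0 * x ≤ omega0 * t := mul_le_mul_right hxt.le _
          _ = t := ht.1.2.2
          _ ≤ β := (ht.2).le
      · exact le_mul_right β omega0_pos
    exact ⟨hβE, hβ0, hβfix⟩

end Stmt10Aux

open Stmt10Aux Ordinal

/-- From a witness `⟨D_α⟩` of `P⁻(κ,2,⊑,κ)`, the derived sequence `⟨C_α⟩`
(with `C_0 = ∅`, `C_{β+1} = {β}`, `C_{ω·β}` of order type `ω` for successor `β`, and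
`C_{ω·β} = {ω·γ : γ ∈ D_β}` for limit `β`) is a coherent `C`-sequence, has cofinally many
members of order type `ω`, and retains the hitting property with respect to cofinal sets of
limit ordinals. -/
theorem stmt10 (κ : Cardinal.{0}) (hreg : κ.IsRegular) (hunc : Cardinal.aleph0 < κ)
    (D Cs : Ordinal → Set Ordinal)
    (hD1 : ∀ α < κ.ord, Order.IsSuccLimit α → ClubIn (D α) α)
    (hD2 : ∀ α < κ.ord, ∀ β ∈ accOf (D α), D β = D α ∩ Set.Iio β)
    (hD3 : ∀ A : Ordinal → Set Ordinal,
      (∀ i < κ.ord, A i ⊆ Set.Iio κ.ord ∧ ∀ β < κ.ord, ∃ γ ∈ A i, β ≤ γ) →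
      StatIn {α | α < κ.ord ∧ ∀ i < α, sSup (naccOf (D α) ∩ A i) = α} κ.ord)
    (hC0 : Cs 0 = ∅)
    (hCsucc : ∀ β, Cs (β + 1) = {β})
    (hComegasucc : ∀ β < κ.ord, ¬ Order.IsSuccLimit β → 0 < β →
      Cs (Ordinal.omega0 * β) ⊆ Set.Iio (Ordinal.omega0 * β) ∧
      ∃ f : ℕ → Ordinal, StrictMono f ∧ Set.range f = Cs (Ordinal.omega0 * β) ∧
        ∀ δ < Ordinal.omega0 * β, ∃ n, δ ≤ f n)
    (hComegalim : ∀ β < κ.ord, Order.IsSuccLimit β →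
      Cs (Ordinal.omega0 * β) = (fun γ => Ordinal.omega0 * γ) '' (D β)) :
    (∀ α < κ.ord, Order.IsSuccLimit α → ClubIn (Cs α) α) ∧
    (∀ α < κ.ord, ∀ β ∈ accOf (Cs α), Cs β = Cs α ∩ Set.Iio β) ∧
    (∀ β < κ.ord, ∃ α, β < α ∧ α < κ.ord ∧
      ∃ f : ℕ → Ordinal, StrictMono f ∧ Set.range f = Cs α) ∧
    (∀ B : Ordinal → Set Ordinal,
      (∀ i < κ.ord, B i ⊆ {δ | δ < κ.ord ∧ Order.IsSuccLimit δ} ∧ ∀ β < κ.ord, ∃ γ ∈ B i, β ≤ γ) →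
      StatIn {α | α < κ.ord ∧ ∀ i < α, sSup (naccOf (Cs α) ∩ B i) = α} κ.ord) := by
  have hκlim : Order.IsSuccLimit κ.ord := Cardinal.isSuccLimit_ord hreg.aleph0_le
  have hnotlim_succ : ∀ x : Ordinal, ¬ Order.IsSuccLimit (x + 1) := by
    intro x h
    have hsl := h.succ_lt (Stmt10Aux.ord_lt_add_one x)
    rw [← Ordinal.add_one_eq_succ] at hsl
    exact absurd hsl (lt_irrefl _)
  refine ⟨?_, ?_, ?_, ?_⟩
  · -- (1) clubs
    intro α hα hlim
    obtain ⟨q, hq0, rfl⟩ := limit_eq_omul hlim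
    have hqκ : q < κ.ord := lt_of_le_of_lt (le_mul_right q omega0_pos) hα
    rcases Ordinal.zero_or_succ_or_isSuccLimit q with rfl | ⟨x, rfl⟩ | hqlim
    · exact absurd hq0 (lt_irrefl 0)
    · -- successor case
      rw [← Ordinal.add_one_eq_succ] at *
      obtain ⟨hsub, f, hf, hrange, hcof⟩ :=
        hComegasucc (x + 1) hqκ (hnotlim_succ x) hq0
      refine ⟨hsub, ?_, ?_⟩
      · intro β hβ
        obtain ⟨n, hn⟩ := hcof β hβ
        exact ⟨f n, hrange ▸ Set.mem_range_self n, hn⟩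
      · intro β hβ hβ0 hsup
        rw [← hrange] at hsup
        exact absurd hsup (no_acc_sSup hf hβ0 (hcof β hβ))
    · -- limit case
      obtain ⟨hDsub, hDunb, hDcl⟩ := hD1 q hqκ hqlim
      rw [hComegalim q hqκ hqlim]
      refine ⟨?_, ?_, ?_⟩
      · rintro x ⟨γ, hγ, rfl⟩
        exact (mul_lt_mul_iff_right₀ omega0_pos).2 (hDsub hγ)
      · intro β hβ
        have hdiv : β / omega0 < q := (Ordinal.div_lt omega0_ne_zero).2 hβ
        have hsucc : β / omega0 + 1 < q := by
          rw [Ordinal.add_one_eq_succ]; exact hqlim.succ_lt hdiv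
        obtain ⟨γ, hγ, hge⟩ := hDunb _ hsucc
        refine ⟨omega0 * γ, ⟨γ, hγ, rfl⟩, le_of_lt ?_⟩
        calc β < omega0 * Order.succ (β / omega0) :=
              Ordinal.lt_mul_succ_div β omega0_ne_zero
          _ = omega0 * (β / omega0 + 1) := by rw [Ordinal.add_one_eq_succ]
          _ ≤ omega0 * γ := mul_le_mul_right hge _
      · intro β hβ hβ0 hsup
        set T := D q ∩ {γ | omega0 * γ < β} with hTdef
        have himg : (fun γ => omega0 * γ) '' (D q) ∩ Set.Iio β
            = (fun γ => omega0 * γ) '' T := by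
          ext x
          constructor
          · rintro ⟨⟨γ, hγ, rfl⟩, hlt⟩
            exact ⟨γ, ⟨hγ, hlt⟩, rfl⟩
          · rintro ⟨γ, ⟨hγ, hlt⟩, rfl⟩
            exact ⟨⟨γ, hγ, rfl⟩, hlt⟩
        rw [himg] at hsup
        have hTne : T.Nonempty := by
          rcases T.eq_empty_or_nonempty with he | hne
          · rw [he, Set.image_empty, csSup_empty] at hsup
            exact absurd hsup.symm (ne_of_gt hβ0)
          · exact hne
        have hTbd : BddAbove T := ⟨q, fun γ hγ => (hDsub hγ.1).le⟩
        rw [omul_sSup hTne hTbd] at hsup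
        set e := sSup T with he
        have heq : e < q := by
          have hlt : omega0 * e < omega0 * q := by rw [hsup]; exact hβ
          exact (mul_lt_mul_iff_right₀ omega0_pos).1 hlt
        have h0e : 0 < e := by
          rw [pos_iff_ne_zero]
          intro h0
          rw [h0, mul_zero] at hsup
          exact (ne_of_gt hβ0) hsup.symm
        by_cases hmem : e ∈ T
        · exact ⟨e, hmem.1, hsup⟩
        · have hTsub : T ⊆ D q ∩ Set.Iio e := fun γ hγ =>
            ⟨hγ.1, lt_of_le_of_ne (le_csSup hTbd hγ) (fun h => hmem (show e ∈ T by show sSup T ∈ T; rw [← h]; exact hγ))⟩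
          have hse : sSup (D q ∩ Set.Iio e) = e :=
            sSup_eq_of_between hTsub (fun x hx => hx.2) rfl h0e
          exact ⟨e, hDcl e heq h0e hse, hsup⟩
  · -- (2) coherence
    intro α hα β hβ
    rcases Ordinal.zero_or_succ_or_isSuccLimit α with rfl | ⟨x, rfl⟩ | hlim
    · rw [hC0] at hβ
      exact absurd hβ.1 (Set.notMem_empty β)
    · rw [← Ordinal.add_one_eq_succ] at *
      rw [hCsucc] at hβ
      obtain ⟨hmem, hpos, hsup⟩ := hβ
      have hx : β = x := hmem
      exfalso
      rw [hx] at hsup hpos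
      have hemp : ({x} : Set Ordinal) ∩ Set.Iio x = ∅ := by
        ext y
        simp only [Set.mem_inter_iff, Set.mem_singleton_iff, Set.mem_Iio,
          Set.mem_empty_iff_false, iff_false, not_and]
        rintro rfl
        exact lt_irrefl y
      rw [hemp, csSup_empty] at hsup
      exact absurd hsup.symm (ne_of_gt hpos)
    · obtain ⟨q, hq0, rfl⟩ := limit_eq_omul hlim
      have hqκ : q < κ.ord := lt_of_le_of_lt (le_mul_right q omega0_pos) hα
      rcases Ordinal.zero_or_succ_or_isSuccLimit q with rfl | ⟨x, rfl⟩ | hqlim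
      · exact absurd hq0 (lt_irrefl 0)
      · rw [← Ordinal.add_one_eq_succ] at *
        obtain ⟨hsub, f, hf, hrange, hcof⟩ :=
          hComegasucc (x + 1) hqκ (hnotlim_succ x) hq0
        rw [← hrange] at hβ
        obtain ⟨⟨k, rfl⟩, hpos, hsup⟩ := hβ
        exact absurd hsup (no_acc_sSup hf hpos ⟨k, le_rfl⟩)
      · have hCs := hComegalim q hqκ hqlim
        rw [hCs, acc_omul] at hβ
        obtain ⟨γ, hγacc, rfl⟩ := hβ
        show Cs (omega0 * γ) = Cs (omega0 * q) ∩ Set.Iio (omega0 * γ)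
        obtain ⟨hγD, hγ0, hγsup⟩ := hγacc
        obtain ⟨hDsub, hDunb, hDcl⟩ := hD1 q hqκ hqlim
        have hγκ : γ < κ.ord := lt_trans (hDsub hγD) hqκ
        have hγlim : Order.IsSuccLimit γ := by
          refine mk_succLimit (ne_of_gt hγ0) fun x hx => ?_
          obtain ⟨s, hs, hxs⟩ := unbdd_of_sSup_eq (S := D q ∩ Set.Iio γ)
            (fun s hs => hs.2) hγsup hγ0 hx
          exact lt_of_le_of_lt (Order.succ_le_of_lt hxs) hs.2
        have hDγ := hD2 q hqκ γ ⟨hγD, hγ0, hγsup⟩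
        rw [hComegalim γ hγκ hγlim, hDγ, hCs, omul_image_inter_Iio]
  · -- (3) cofinally many of order type ω
    intro β hβ
    have hβ1 : β + 1 < κ.ord := by
      rw [Ordinal.add_one_eq_succ]; exact hκlim.succ_lt hβ
    have hακ : omega0 * (β + 1) < κ.ord := omul_lt_ord hunc hβ1
    have hβα : β < omega0 * (β + 1) :=
      lt_of_lt_of_le (ord_lt_add_one β) (le_mul_right _ omega0_pos)
    have hpos : (0 : Ordinal) < β + 1 :=
      lt_of_le_of_lt (zero_le (a := β)) (ord_lt_add_one β)
    obtain ⟨_, f, hf, hrange, _⟩ := hComegasucc (β + 1) hβ1 (hnotlim_succ β) hpos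
    exact ⟨omega0 * (β + 1), hβα, hακ, f, hf, hrange⟩
  · -- (4) hitting property
    intro B hB
    set A : Ordinal → Set Ordinal := fun i => {γ | omega0 * γ ∈ B i} with hA
    have hAprop : ∀ i < κ.ord, A i ⊆ Set.Iio κ.ord ∧ ∀ β < κ.ord, ∃ γ ∈ A i, β ≤ γ := by
      intro i hi
      obtain ⟨hBsub, hBcof⟩ := hB i hi
      constructor
      · intro γ hγ
        exact lt_of_le_of_lt (le_mul_right γ omega0_pos) (hBsub hγ).1
      · intro β hβ
        obtain ⟨δ, hδ, hge⟩ := hBcof (omega0 * β) (omul_lt_ord hunc hβ)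
        obtain ⟨hδκ, hδlim⟩ := hBsub hδ
        obtain ⟨γ, hγ0, rfl⟩ := limit_eq_omul hδlim
        exact ⟨γ, hδ, le_of_mul_le_mul_left hge omega0_pos⟩
    have hstat := hD3 A hAprop
    intro E hE
    obtain ⟨α, hαS, hαE, hα0, hαfix⟩ :=
      hstat _ (club_inter_omul_fixed hreg hunc hE)
    refine ⟨α, ⟨hαS.1, ?_⟩, hαE⟩
    intro i hi
    have hαlim : Order.IsSuccLimit α := by
      have := isSuccLimit_mul_left isSuccLimit_omega0 hα0
      rwa [hαfix] at this
    have hCsα : Cs α = (fun γ => omega0 * γ) '' (D α) := by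
      have := hComegalim α hαS.1 hαlim
      rwa [hαfix] at this
    have hDα := hD1 α hαS.1 hαlim
    have hi' : sSup (naccOf (D α) ∩ A i) = α := hαS.2 i hi
    have hI : naccOf (Cs α) ∩ B i
        = (fun γ => omega0 * γ) '' (naccOf (D α) ∩ A i) := by
      rw [hCsα, nacc_omul]
      ext x
      constructor
      · rintro ⟨⟨γ, hγ, rfl⟩, hxB⟩
        exact ⟨γ, ⟨hγ, hxB⟩, rfl⟩
      · rintro ⟨γ, ⟨hγ, hγA⟩, rfl⟩
        exact ⟨⟨γ, hγ, rfl⟩, hγA⟩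
    rw [hI]
    have hne : (naccOf (D α) ∩ A i).Nonempty := by
      rcases (naccOf (D α) ∩ A i).eq_empty_or_nonempty with he | hne
      · rw [he, csSup_empty] at hi'
        exact absurd hi'.symm (ne_of_gt hα0)
      · exact hne
    have hbd : BddAbove (naccOf (D α) ∩ A i) :=
      ⟨α, fun x hx => (hDα.1 hx.1.1).le⟩
    rw [omul_sSup hne hbd, hi', hαfix]
end
end

section
/- Suppose ⟨C_α : α < κ⟩ is a coherent C-sequence (for limit α, C_α club in α; C_ᾱ = C_α ∩ ᾱ for ᾱ ∈ acc(C_α)) with the hitting property: for every sequence ⟨B_i : i < κ⟩ of cofinal subsets of κ there are stationarily many α such that sup(nacc(C_α) ∩ B_i) = α for all i < α. Then there is no club D ⊆ κ such that D ∩ α = C_α for every α ∈ acc(D). -/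
noncomputable section
open Cardinal Set

/-- A coherent `C`-sequence with the hitting property has no thread: there is no club
`D ⊆ κ` with `D ∩ α = C_α` for every `α ∈ acc(D)`. -/
theorem stmt11 (κ : Cardinal.{0}) (hreg : κ.IsRegular) (hunc : Cardinal.aleph0 < κ)
    (Cs : Ordinal → Set Ordinal)
    (h1 : ∀ α < κ.ord, Order.IsSuccLimit α → ClubIn (Cs α) α)
    (h2 : ∀ α < κ.ord, ∀ β ∈ accOf (Cs α), Cs β = Cs α ∩ Set.Iio β)
    (h3 : ∀ B : Ordinal → Set Ordinal,
      (∀ i < κ.ord, B i ⊆ Set.Iio κ.ord ∧ ∀ β < κ.ord, ∃ γ ∈ B i, β ≤ γ) →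
      StatIn {α | α < κ.ord ∧ ∀ i < α, sSup (naccOf (Cs α) ∩ B i) = α} κ.ord) :
    ¬ ∃ D : Set Ordinal, ClubIn D κ.ord ∧ ∀ α ∈ accOf D, D ∩ Set.Iio α = Cs α := by
  rintro ⟨D, ⟨hDsub, hDunb, hDcl⟩, hcoh⟩
  have hlim : Order.IsSuccLimit κ.ord := Cardinal.isSuccLimit_ord hunc.le
  have hAsub : accOf D ⊆ Set.Iio κ.ord := fun x hx => hDsub hx.1
  -- acc(D) is unbounded
  have hAunb : ∀ β < κ.ord, ∃ γ ∈ accOf D, β ≤ γ := by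
    intro β hβ
    have step : ∀ x : Set.Iio κ.ord, ∃ y : Set.Iio κ.ord, y.1 ∈ D ∧ x.1 < y.1 := by
      rintro ⟨x, hx⟩
      obtain ⟨γ, hγD, hγ⟩ := hDunb (x + 1) (by
        rw [Ordinal.add_one_eq_succ]
        exact hlim.succ_lt hx)
      exact ⟨⟨γ, hDsub hγD⟩, hγD, lt_of_lt_of_le (by
        rw [Ordinal.add_one_eq_succ] at hγ ⊢; exact Order.lt_succ x) hγ⟩
    choose F hFD hFlt using step
    let g : ℕ → Set.Iio κ.ord := fun n => Nat.rec (F ⟨β, hβ⟩) (fun _ y => F y) n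
    have hgD : ∀ n, (g n).1 ∈ D := by
      intro n; cases n with
      | zero => exact hFD _
      | succ m => exact hFD (g m)
    have hgmono : ∀ n, (g n).1 < g (n + 1) := fun n => hFlt (g n)
    set s := ⨆ n, (g n).1 with hs
    have hbdd : BddAbove (Set.range fun n => (g n).1) :=
      ⟨κ.ord, by rintro _ ⟨n, rfl⟩; exact le_of_lt (g n).2⟩
    have hle : ∀ n, (g n).1 ≤ s := fun n => le_ciSup hbdd n
    have hlt : ∀ n, (g n).1 < s := fun n => lt_of_lt_of_le (hgmono n) (hle (n + 1))
    have hs0 : 0 < s := lt_of_le_of_lt (zero_le (a := (g 0).1)) (hlt 0)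
    have hsκ : s < κ.ord := by
      refine Ordinal.iSup_lt_ord ?_ fun n => (g n).2
      rw [Cardinal.mk_nat, hreg.cof_eq]
      exact hunc
    have hbdd2 : BddAbove (D ∩ Set.Iio s) := ⟨s, fun x hx => le_of_lt hx.2⟩
    have hsupD : sSup (D ∩ Set.Iio s) = s := by
      refine le_antisymm (csSup_le' fun x hx => le_of_lt hx.2) ?_
      rw [hs]
      exact ciSup_le fun n => le_csSup hbdd2 ⟨hgD n, hlt n⟩
    have hsD : s ∈ D := hDcl s hsκ hs0 hsupD
    exact ⟨s, ⟨hsD, hs0, hsupD⟩, le_of_lt (lt_of_lt_of_le (hFlt ⟨β, hβ⟩) (hle 0))⟩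
  -- acc(D) is closed
  have hAcl : ∀ β < κ.ord, 0 < β → sSup (accOf D ∩ Set.Iio β) = β → β ∈ accOf D := by
    intro β hβ h0 hsup
    have hne : (accOf D ∩ Set.Iio β).Nonempty := by
      by_contra h
      rw [Set.not_nonempty_iff_eq_empty] at h
      rw [h, csSup_empty] at hsup
      exact absurd hsup.symm (ne_of_gt (by simpa using h0))
    have hsub : accOf D ∩ Set.Iio β ⊆ D ∩ Set.Iio β := fun x hx => ⟨hx.1.1, hx.2⟩
    have hb1 : sSup (D ∩ Set.Iio β) ≤ β := csSup_le' fun x hx => le_of_lt hx.2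
    have hb2 : β ≤ sSup (D ∩ Set.Iio β) := by
      have := csSup_le_csSup (⟨β, fun x hx => le_of_lt hx.2⟩ : BddAbove (D ∩ Set.Iio β)) hne hsub
      rwa [hsup] at this
    have heq : sSup (D ∩ Set.Iio β) = β := le_antisymm hb1 hb2
    exact ⟨hDcl β hβ h0 heq, h0, heq⟩
  have hAclub : ClubIn (accOf D) κ.ord := ⟨hAsub, hAunb, hAcl⟩
  obtain ⟨α, ⟨hακ, hαall⟩, hαA⟩ :=
    h3 (fun _ => accOf D) (fun i _ => ⟨hAsub, hAunb⟩) (accOf D) hAclub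
  have h0α : 0 < α := hαA.2.1
  have hCα : Cs α = D ∩ Set.Iio α := (hcoh α hαA).symm
  have hkey : sSup (naccOf (Cs α) ∩ accOf D) = α := hαall 0 h0α
  have hempty : naccOf (Cs α) ∩ accOf D = ∅ := by
    ext x
    simp only [Set.mem_inter_iff, Set.mem_empty_iff_false, iff_false]
    rintro ⟨⟨hxC, hxn⟩, hxA⟩
    apply hxn
    rw [hCα] at hxC ⊢
    refine ⟨hxC, hxA.2.1, ?_⟩
    have : D ∩ Set.Iio α ∩ Set.Iio x = D ∩ Set.Iio x := by
      ext y
      constructor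
      · rintro ⟨⟨hy1, _⟩, hy3⟩; exact ⟨hy1, hy3⟩
      · rintro ⟨hy1, hy2⟩; exact ⟨⟨hy1, Set.mem_Iio.mpr (lt_trans (Set.mem_Iio.mp hy2) (Set.mem_Iio.mp hxC.2))⟩, hy2⟩
    rw [this, hxA.2.2]
  rw [hempty, csSup_empty] at hkey
  exact absurd hkey.symm (ne_of_gt (by simpa using h0α))
end
end

section
/- Let T ⊆ {}^{<κ}ω be a ϱ-coherent streamlined κ-tree such that each limit level T_α equals {η * b^α : η ∈ ϱ, dom(η) ⊆ α} \ {∅} for some distinguished node b^α : α → ω with (b^α)⁻¹(0) = C_α, where ⟨C_α⟩ is a coherent C-sequence with no thread (no club D with D ∩ α = C_α for all α ∈ acc(D)). Then T has no branch of size κ, i.e., T is κ-Aronszajn. -/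
noncomputable section
open Cardinal Set

lemma anchor_eq_max' {κ : Cardinal.{0}} (η : RhoMod κ) (γ : Ordinal)
    (h : η.x.max' ⟨0, η.zero_mem⟩ ≤ γ) : η.anchor γ = η.x.max' ⟨0, η.zero_mem⟩ := by
  unfold RhoMod.anchor
  apply le_antisymm
  · exact Finset.max'_le _ _ _ (fun y hy => Finset.le_max' _ _ (Finset.filter_subset _ _ hy))
  · refine Finset.le_max' _ _ ?_
    rw [Finset.mem_filter]
    exact ⟨Finset.max'_mem _ _, h⟩

lemma myWeakFodor {κ : Cardinal.{0}} (hreg : κ.IsRegular) (hunc : Cardinal.aleph0 < κ)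
    (F : Ordinal → Ordinal) (hF : ∀ α, α < κ.ord → Order.IsSuccLimit α → F α < α) :
    ∃ ε, ∀ β < κ.ord, ∃ α, β ≤ α ∧ α < κ.ord ∧ Order.IsSuccLimit α ∧ F α = ε := by
  by_contra hcon
  push_neg at hcon
  choose g hg1 hg2 using hcon
  have hord : Order.IsSuccLimit (Cardinal.ord κ) := Cardinal.isSuccLimit_ord hreg.aleph0_le
  set H : Ordinal → Ordinal := fun β => Ordinal.bsup β (fun γ _ => g γ) with hH
  have hHlt : ∀ β, β < κ.ord → H β < κ.ord := by
    intro β hβ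
    exact Cardinal.bsup_lt_ord_of_isRegular hreg (Cardinal.lt_ord.1 hβ) (fun γ _ => hg1 γ)
  set a : ℕ → Ordinal := fun n => Nat.rec 0 (fun _ x => max (x + 1) (H (x + 1))) n with ha
  have ha0 : a 0 = 0 := rfl
  have hasucc : ∀ n, a (n + 1) = max (a n + 1) (H (a n + 1)) := fun n => rfl
  have halt : ∀ n, a n < κ.ord := by
    intro n; induction n with
    | zero => exact hord.pos
    | succ n ih =>
        rw [hasucc]
        have h1 : a n + 1 < κ.ord := by
          rw [Ordinal.add_one_eq_succ]; exact hord.succ_lt ih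
        exact max_lt h1 (hHlt _ h1)
  have hamono : ∀ n, a n < a (n + 1) := by
    intro n; rw [hasucc]
    exact lt_max_of_lt_left (lt_of_lt_of_le (Order.lt_succ (a n)) (Ordinal.add_one_eq_succ (a n)).ge)
  set α : Ordinal := iSup a with hαdef
  have hle : ∀ n, a n ≤ α := Ordinal.le_iSup a
  have hακ : α < κ.ord := Cardinal.iSup_lt_ord_of_isRegular hreg (by simpa using hunc) halt
  have hlim : Order.IsSuccLimit α := by
    rw [Ordinal.isSuccLimit_iff]; refine ⟨?_, Order.isSuccPrelimit_of_succ_lt ?_⟩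
    · intro h0
      have := lt_of_lt_of_le (hamono 0) (hle 1)
      rw [h0] at this
      exact absurd this (not_lt_zero (a := _))
    · intro x hx
      obtain ⟨n, hn⟩ := (Ordinal.lt_iSup_iff).1 hx
      calc Order.succ x ≤ a n := Order.succ_le_of_lt hn
        _ < a (n+1) := hamono n
        _ ≤ α := hle (n+1)
  have hFα := hF α hακ hlim
  set e := F α with he
  have h1 : ¬ (g e ≤ α) := by
    intro h
    exact hg2 e α h hακ hlim rfl
  obtain ⟨n, hn⟩ := (Ordinal.lt_iSup_iff).1 hFα
  have h2 : g e ≤ H (a n + 1) := by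
    have : e < a n + 1 := lt_of_lt_of_le hn (le_of_lt (lt_of_le_of_lt le_rfl (lt_of_lt_of_le (Order.lt_succ (a n)) (Ordinal.add_one_eq_succ (a n)).ge)))
    exact Ordinal.le_bsup (fun γ _ => g γ) e this
  have h3 : H (a n + 1) ≤ a (n + 1) := by rw [hasucc]; exact le_max_right _ _
  exact h1 (h2.trans (h3.trans (hle (n+1))))

lemma myPigeon {κ : Cardinal.{0}} (hreg : κ.IsRegular) (hunc : Cardinal.aleph0 < κ)
    {P : Ordinal → Prop} (hP : ∀ β < κ.ord, ∃ α, β ≤ α ∧ α < κ.ord ∧ P α)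
    (c : Ordinal → ℤ) :
    ∃ z, ∀ β < κ.ord, ∃ α, β ≤ α ∧ α < κ.ord ∧ P α ∧ c α = z := by
  by_contra hcon
  push_neg at hcon
  choose g hg1 hg2 using hcon
  have hB : iSup g < κ.ord :=
    Cardinal.iSup_lt_ord_of_isRegular hreg (by simpa using hunc) hg1
  obtain ⟨α, hle, hκ, hPα⟩ := hP (iSup g) hB
  exact hg2 (c α) α ((Ordinal.le_iSup g (c α)).trans hle) hκ hPα rfl

/-- A `ϱ`-coherent streamlined `κ`-tree whose limit levels are generated by distinguished
nodes `b^α` with `(b^α)⁻¹(0) = C_α`, for an unthreaded coherent `C`-sequence `⟨C_α⟩`,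
has no branch of size `κ`: it is `κ`-Aronszajn. -/
theorem stmt12 (κ : Cardinal.{0}) (hreg : κ.IsRegular) (hunc : Cardinal.aleph0 < κ)
    (T : Set ONode) (hT : IsStreamTree κ T) (hcoh : RhoCoherent κ T)
    (Cs : Ordinal → Set Ordinal)
    (hCseq : ∀ α < κ.ord, Order.IsSuccLimit α → ClubIn (Cs α) α)
    (hCcoh : ∀ α < κ.ord, ∀ β ∈ accOf (Cs α), Cs β = Cs α ∩ Set.Iio β)
    (hnothread : ¬ ∃ D : Set Ordinal, ClubIn D κ.ord ∧ ∀ α ∈ accOf D, D ∩ Set.Iio α = Cs α)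
    (b : Ordinal → ONode)
    (hb : ∀ α < κ.ord, Order.IsSuccLimit α →
      nodeDom (b α) α ∧ {γ | b α γ = some 0} = Cs α ∧
      levelSet T α = {t | (∃ η : RhoMod κ, (∀ γ ∈ η.x, γ < α) ∧ rhoDefined η (b α) ∧
        t = rhoAct η (b α)) ∧ t ≠ (fun _ => none)}) :
    ¬ ∃ d : Ordinal → ℕ,
      ∀ α < κ.ord, (fun γ => if γ < α then some (d γ) else none) ∈ T := by
  rintro ⟨d, hd⟩
  have hord : Order.IsSuccLimit (Cardinal.ord κ) := Cardinal.isSuccLimit_ord hreg.aleph0_le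
  set t : Ordinal → ONode := fun α γ => if γ < α then some (d γ) else none with ht
  have htdom : ∀ α, nodeDom (t α) α := by
    intro α γ
    by_cases h : γ < α <;> simp [t, h]
  -- choose the modifications η
  have hηex : ∀ α, α < κ.ord → Order.IsSuccLimit α → ∃ η : RhoMod κ,
      (∀ γ ∈ η.x, γ < α) ∧ rhoDefined η (b α) ∧ t α = rhoAct η (b α) := by
    intro α hα hlim
    have h1 : t α ∈ levelSet T α := ⟨hd α hα, htdom α⟩
    rw [(hb α hα hlim).2.2] at h1
    exact h1.1
  haveI : Nonempty (RhoMod κ) :=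
    ⟨⟨{0}, Finset.mem_singleton_self 0, by
      intro β hβ
      rw [Finset.mem_singleton] at hβ
      subst hβ
      exact ⟨hord.pos, Ordinal.not_isSuccLimit_zero⟩, fun _ => 0⟩⟩
  choose! η hη1 hη2 hη3 using hηex
  set ε : Ordinal → Ordinal := fun α => (η α).x.max' ⟨0, (η α).zero_mem⟩ with hε
  have hεlt : ∀ α, α < κ.ord → Order.IsSuccLimit α → ε α < α := fun α h1 h2 =>
    hη1 α h1 h2 _ (Finset.max'_mem _ _)
  obtain ⟨ε₀, hS0⟩ := myWeakFodor hreg hunc ε hεlt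
  obtain ⟨c₀, hS1⟩ := myPigeon hreg hunc (P := fun α => Order.IsSuccLimit α ∧ ε α = ε₀)
    (fun β hβ => by obtain ⟨α, h1, h2, h3, h4⟩ := hS0 β hβ; exact ⟨α, h1, h2, h3, h4⟩)
    (fun α => (η α).f ε₀)
  set S : Set Ordinal := {α | α < κ.ord ∧ Order.IsSuccLimit α ∧ ε α = ε₀ ∧ (η α).f ε₀ = c₀} with hSdef
  have hSub : ∀ β < κ.ord, ∃ α ∈ S, β < α := by
    intro β hβ
    have hβ1 : β + 1 < κ.ord := by
      rw [Ordinal.add_one_eq_succ]; exact hord.succ_lt hβ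
    obtain ⟨α, h1, h2, ⟨h3, h4⟩, h5⟩ := hS1 (β + 1) hβ1
    exact ⟨α, ⟨h2, h3, h4, h5⟩, lt_of_lt_of_le
      (lt_of_lt_of_le (Order.lt_succ β) (Ordinal.add_one_eq_succ β).ge) h1⟩
  -- anchor computation
  have hanchor : ∀ α γ, ε α ≤ γ → (η α).anchor γ = ε α := by
    intro α γ h
    simp only [hε] at h ⊢
    exact anchor_eq_max' (η α) γ h
  have hbsome : ∀ α, α < κ.ord → Order.IsSuccLimit α → ∀ γ, γ < α → ∃ m, b α γ = some m := by
    intro α h1 h2 γ hγ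
    exact Option.isSome_iff_exists.1 (((hb α h1 h2).1 γ).2 hγ)
  have hval : ∀ α, α < κ.ord → Order.IsSuccLimit α → ∀ γ m, γ < α → b α γ = some m →
      (η α).f ((η α).anchor γ) + (m : ℤ) = (d γ : ℤ) := by
    intro α h1 h2 γ m hγ hm
    have h3 := congrFun (hη3 α h1 h2) γ
    have h4 : t α γ = some (d γ) := by simp [t, hγ]
    rw [h4] at h3
    have h5 : rhoAct (η α) (b α) γ = some (((η α).f ((η α).anchor γ) + (m : ℤ)).toNat) := by
      simp [rhoAct, hm]
    rw [h5] at h3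
    have h6 : (0 : ℤ) ≤ (η α).f ((η α).anchor γ) + (m : ℤ) := hη2 α h1 h2 γ m hm
    have h7 : d γ = ((η α).f ((η α).anchor γ) + (m : ℤ)).toNat := Option.some.inj h3
    rw [h7]
    exact (Int.toNat_of_nonneg h6).symm
  -- agreement of the C-sequence above ε₀ on S
  have hagree : ∀ α ∈ S, ∀ α' ∈ S, ∀ γ, ε₀ ≤ γ → γ < α → γ < α' → γ ∈ Cs α → γ ∈ Cs α' := by
    intro α hα α' hα' γ hγ1 hγ2 hγ3 hmem
    obtain ⟨hα1, hα2, hα3, hα4⟩ := hα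
    obtain ⟨hα'1, hα'2, hα'3, hα'4⟩ := hα'
    have e1 : b α γ = some 0 := by
      rw [← (hb α hα1 hα2).2.1] at hmem; exact hmem
    obtain ⟨m, e2⟩ := hbsome α' hα'1 hα'2 γ hγ3
    have v1 := hval α hα1 hα2 γ 0 hγ2 e1
    have v2 := hval α' hα'1 hα'2 γ m hγ3 e2
    rw [hanchor α γ (hα3 ▸ hγ1)] at v1
    rw [hanchor α' γ (hα'3 ▸ hγ1)] at v2
    rw [hα3, hα4] at v1
    rw [hα'3, hα'4] at v2
    have hm0 : m = 0 := by omega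
    rw [← (hb α' hα'1 hα'2).2.1]
    show b α' γ = some 0
    rw [e2, hm0]
  -- coherence of the C-sequence on S
  have hcoh2 : ∀ α ∈ S, ∀ α' ∈ S, α < α' → Cs α = Cs α' ∩ Set.Iio α := by
    intro α hα α' hα' hlt
    have hclubα := hCseq α hα.1 hα.2.1
    have hclubα' := hCseq α' hα'.1 hα'.2.1
    have hε₀α : ε₀ < α := hα.2.2.1 ▸ hεlt α hα.1 hα.2.1
    have hsup_ge : ∀ β, β < α → ∃ x ∈ Cs α' ∩ Set.Iio α, β ≤ x := by
      intro β hβ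
      obtain ⟨x, hx1, hx2⟩ := hclubα.2.1 (max β ε₀) (max_lt hβ hε₀α)
      have hxα : x < α := hclubα.1 hx1
      have hx3 : x ∈ Cs α' := hagree α hα α' hα' x (le_trans (le_max_right _ _) hx2)
        hxα (hxα.trans hlt) hx1
      exact ⟨x, ⟨hx3, hxα⟩, le_trans (le_max_left _ _) hx2⟩
    have hbdd : BddAbove (Cs α' ∩ Set.Iio α) := ⟨α, fun x hx => le_of_lt hx.2⟩
    have hsup : sSup (Cs α' ∩ Set.Iio α) = α := by
      refine le_antisymm (csSup_le' fun x hx => le_of_lt hx.2) ?_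
      by_contra h
      push_neg at h
      have hsucc : sSup (Cs α' ∩ Set.Iio α) + 1 < α := by
        rw [Ordinal.add_one_eq_succ]; exact hα.2.1.succ_lt h
      obtain ⟨x, hx, hle⟩ := hsup_ge _ hsucc
      have : x ≤ sSup (Cs α' ∩ Set.Iio α) := le_csSup hbdd hx
      have h2 : sSup (Cs α' ∩ Set.Iio α) < sSup (Cs α' ∩ Set.Iio α) + 1 :=
        lt_of_lt_of_le (Order.lt_succ _) (Ordinal.add_one_eq_succ _).ge
      exact absurd (lt_of_lt_of_le h2 (hle.trans this)) (lt_irrefl _)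
    have hαmem : α ∈ Cs α' := hclubα'.2.2 α hlt hα.2.1.pos hsup
    exact hCcoh α' hα'.1 α ⟨hαmem, hα.2.1.pos, hsup⟩
  -- the thread
  set D : Set Ordinal := {γ | ∃ α ∈ S, γ ∈ Cs α} with hDdef
  have hD_cap : ∀ α ∈ S, D ∩ Set.Iio α = Cs α := by
    intro α hα
    ext γ
    constructor
    · rintro ⟨⟨α'', hα'', hγ⟩, hlt⟩
      rcases lt_trichotomy α'' α with h | h | h
      · exact ((hcoh2 α'' hα'' α hα h) ▸ hγ).1
      · exact h ▸ hγ
      · exact (hcoh2 α hα α'' hα'' h) ▸ ⟨hγ, hlt⟩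
    · intro hγ
      exact ⟨⟨α, hα, hγ⟩, (hCseq α hα.1 hα.2.1).1 hγ⟩
  have hD_capβ : ∀ α ∈ S, ∀ β ≤ α, D ∩ Set.Iio β = Cs α ∩ Set.Iio β := by
    intro α hα β hβ
    rw [← hD_cap α hα]
    ext γ
    exact ⟨fun h => ⟨⟨h.1, lt_of_lt_of_le h.2 hβ⟩, h.2⟩, fun h => ⟨h.1.1, h.2⟩⟩
  have hDclub : ClubIn D (Cardinal.ord κ) := by
    refine ⟨?_, ?_, ?_⟩
    · rintro γ ⟨α, hα, hγ⟩
      exact lt_trans ((hCseq α hα.1 hα.2.1).1 hγ) hα.1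
    · intro β hβ
      obtain ⟨α, hα, hlt⟩ := hSub β hβ
      obtain ⟨x, hx1, hx2⟩ := (hCseq α hα.1 hα.2.1).2.1 β hlt
      exact ⟨x, ⟨α, hα, hx1⟩, hx2⟩
    · intro β hβ hpos hsup
      obtain ⟨α, hα, hlt⟩ := hSub β hβ
      rw [hD_capβ α hα β (le_of_lt hlt)] at hsup
      exact ⟨α, hα, (hCseq α hα.1 hα.2.1).2.2 β hlt hpos hsup⟩
  refine hnothread ⟨D, hDclub, ?_⟩
  rintro γ ⟨hγD, hγpos, hγsup⟩
  have hγκ : γ < κ.ord := hDclub.1 hγD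
  obtain ⟨α, hα, hlt⟩ := hSub γ hγκ
  have h1 : D ∩ Set.Iio γ = Cs α ∩ Set.Iio γ := hD_capβ α hα γ (le_of_lt hlt)
  have h2 : γ ∈ Cs α := (hD_cap α hα) ▸ (⟨hγD, hlt⟩ : γ ∈ D ∩ Set.Iio α)
  rw [h1] at hγsup ⊢
  rw [← hCcoh α hα.1 γ ⟨h2, hγpos, hγsup⟩]
end
end

section
/- Let (S,<_S,<_lS) and (T,<_T,<_lT) be lexicographically ordered Hausdorff κ-Aronszajn trees, X ⊆ S and Y ⊆ T both of size κ, and π : (X,<_lS) → (Y,<_lT) an order isomorphism. Then there exists a club C ⊆ κ and a map f : (X_↓)↾C → (Y_↓)↾C which is simultaneously a tree isomorphism and a lexicographic-order isomorphism, and f agrees with π in the sense that π''(x^↑ ∩ X) = f(x)^↑ ∩ Y for all x ∈ (X_↓)↾C. -/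
noncomputable section
open Cardinal Set

/-- A lexicographically ordered Hausdorff `κ`-Aronszajn tree: a `κ`-tree `(X, tlt)` with
height function `ht`, Hausdorff at limit levels, with no chain of size `κ`, together with a
linear order `llt` extending the tree order consistently (incomparable nodes are ordered
according to their behaviour above their meet). -/
structure LexKTree (κ : Cardinal.{0}) where
  X : Type 1
  tlt : X → X → Prop
  ht : X → Ordinal
  llt : X → X → Prop
  tlt_irrefl : ∀ a, ¬ tlt a a
  tlt_trans : ∀ a b c, tlt a b → tlt b c → tlt a c
  ht_lt : ∀ x, ht x < κ.ord
  ht_mono : ∀ x y, tlt x y → ht x < ht y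
  level_ne : ∀ β < κ.ord, ∃ x, ht x = β
  level_small : ∀ β < κ.ord, Cardinal.mk ↥{x | ht x = β} < Cardinal.lift.{1} κ
  pred_ex : ∀ x, ∀ β < ht x, ∃! y, tlt y x ∧ ht y = β
  pred_lin : ∀ x y z, tlt y x → tlt z x → tlt y z ∨ y = z ∨ tlt z y
  hausdorff : ∀ x y, ht x = ht y → Order.IsSuccLimit (ht x) → (∀ z, tlt z x ↔ tlt z y) → x = y
  aronszajn : ¬ ∃ B : Set X, (∀ a ∈ B, ∀ c ∈ B, a = c ∨ tlt a c ∨ tlt c a) ∧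
    Cardinal.lift.{1} κ ≤ Cardinal.mk ↥B
  llt_irrefl : ∀ a, ¬ llt a a
  llt_trans : ∀ a b c, llt a b → llt b c → llt a c
  llt_total : ∀ a b, a = b ∨ llt a b ∨ llt b a
  llt_of_tlt : ∀ a b, tlt a b → llt a b
  llt_coherent : ∀ x y u v, ¬ tlt x y → ¬ tlt y x → x ≠ y → llt x y →
    (x = u ∨ tlt x u) → (y = v ∨ tlt y v) → llt u v

namespace S15
variable {κ : Cardinal.{0}}

/-- tree "less or equal": `z` is above or equal `x`. -/
def tle (S : LexKTree κ) (x z : S.X) : Prop := z = x ∨ S.tlt x z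

/-- downward closure of `X`. -/
def dcl (S : LexKTree κ) (X : Set S.X) : Set S.X := {x | ∃ x' ∈ X, x = x' ∨ S.tlt x x'}

/-- upward cone of `x` within `X`. -/
def cone (S : LexKTree κ) (X : Set S.X) (x : S.X) : Set S.X := {z | z ∈ X ∧ (z = x ∨ S.tlt x z)}

variable {S : LexKTree κ}

lemma tle_refl (x : S.X) : tle S x x := Or.inl rfl

lemma tlt_asymm {a b : S.X} (h1 : S.tlt a b) (h2 : S.tlt b a) : False :=
  S.tlt_irrefl a (S.tlt_trans a b a h1 h2)

lemma llt_asymm {a b : S.X} (h1 : S.llt a b) (h2 : S.llt b a) : False :=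
  S.llt_irrefl a (S.llt_trans a b a h1 h2)

lemma tle_trans {a b c : S.X} (h1 : tle S a b) (h2 : tle S b c) : tle S a c := by
  rcases h1 with rfl | h1
  · exact h2
  rcases h2 with rfl | h2
  · exact Or.inr h1
  · exact Or.inr (S.tlt_trans _ _ _ h1 h2)

lemma tle_ht {a b : S.X} (h : tle S a b) : S.ht a ≤ S.ht b := by
  rcases h with rfl | h
  · exact le_rfl
  · exact (S.ht_mono _ _ h).le

lemma mem_dcl_of_tle {a b : S.X} {X : Set S.X} (h : tle S a b) (hb : b ∈ dcl S X) :
    a ∈ dcl S X := by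
  obtain ⟨x', hx', hb'⟩ := hb
  have hb2 : tle S b x' := by rcases hb' with h'|h' ; exact Or.inl h'.symm ; exact Or.inr h'
  rcases tle_trans h hb2 with h'|h'
  exacts [⟨x', hx', Or.inl h'.symm⟩, ⟨x', hx', Or.inr h'⟩]

lemma mem_dcl_of_mem {X : Set S.X} {x : S.X} (h : x ∈ X) : x ∈ dcl S X := ⟨x, h, Or.inl rfl⟩

lemma cone_subset {X : Set S.X} {s : S.X} : cone S X s ⊆ X := fun _ h => h.1

lemma mem_cone_self {X : Set S.X} {x : S.X} (h : x ∈ X) : x ∈ cone S X x := ⟨h, Or.inl rfl⟩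

lemma exists_mem_cone {X : Set S.X} {s : S.X} (h : s ∈ dcl S X) : ∃ x, x ∈ cone S X s := by
  obtain ⟨x', hx', h'⟩ := h
  exact ⟨x', hx', by rcases h' with h' | h' <;> [exact Or.inl h'.symm; exact Or.inr h']⟩

lemma tle_of_mem_cone {X : Set S.X} {s z : S.X} (h : z ∈ cone S X s) : tle S s z := h.2

lemma cone_mono {X : Set S.X} {s s' : S.X} (h : tle S s s') : cone S X s' ⊆ cone S X s := by
  rintro z ⟨hz, hz'⟩
  exact ⟨hz, tle_trans h hz'⟩

/-- two nodes below a common node with distinct heights are comparable. -/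
lemma two_below {z y y' : S.X} (h1 : tle S y z) (h2 : tle S y' z)
    (h : S.ht y < S.ht y') : S.tlt y y' := by
  rcases h2 with rfl | h2
  · rcases h1 with rfl | h1
    · exact absurd h (lt_irrefl _)
    · exact h1
  · rcases h1 with rfl | h1
    · exact absurd (h.trans (S.ht_mono _ _ h2)) (lt_irrefl _)
    · rcases S.pred_lin z y y' h1 h2 with h3 | rfl | h3
      · exact h3
      · exact absurd h (lt_irrefl _)
      · exact absurd (h.trans (S.ht_mono _ _ h3)) (lt_irrefl _)

lemma two_below_eq {z y y' : S.X} (h1 : tle S y z) (h2 : tle S y' z)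
    (h : S.ht y = S.ht y') : y = y' := by
  rcases h1 with rfl | h1
  · rcases h2 with rfl | h2
    · rfl
    · exact absurd (S.ht_mono _ _ h2) (by simp [h])
  · rcases h2 with rfl | h2
    · exact absurd (S.ht_mono _ _ h1) (by simp [h])
    · rcases S.pred_lin z y y' h1 h2 with h3 | h3 | h3
      · exact absurd (S.ht_mono _ _ h3) (by simp [h])
      · exact h3
      · exact absurd (S.ht_mono _ _ h3) (by simp [h])

/-- existence of the predecessor-or-self at any level `β ≤ ht x`. -/
lemma exists_tle_ht (x : S.X) {β : Ordinal} (hβ : β ≤ S.ht x) :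
    ∃ y, tle S y x ∧ S.ht y = β := by
  rcases eq_or_lt_of_le hβ with rfl | h
  · exact ⟨x, tle_refl x, rfl⟩
  · obtain ⟨y, ⟨hy1, hy2⟩, _⟩ := S.pred_ex x β h
    exact ⟨y, Or.inr hy1, hy2⟩

/-- Hausdorff property from agreement of predecessors on a cofinal set. -/
lemma haus_cofinal {α : Ordinal} (hlim : Order.IsSuccLimit α) {p q : S.X}
    (hp : S.ht p = α) (hq : S.ht q = α) (M : Set Ordinal)
    (hcof : ∀ β < α, ∃ γ ∈ M, β < γ ∧ γ < α)
    (hsame : ∀ γ ∈ M, γ < α → ∀ y, tle S y p → S.ht y = γ → tle S y q) : p = q := by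
  refine S.hausdorff p q (hp.trans hq.symm) (hp ▸ hlim) fun z => ⟨fun hz => ?_, fun hz => ?_⟩
  · have hzht : S.ht z < α := hp ▸ S.ht_mono _ _ hz
    obtain ⟨γ, hγM, hγ1, hγ2⟩ := hcof _ hzht
    obtain ⟨y, hy1, hy2⟩ := exists_tle_ht p (hp ▸ hγ2.le)
    have hyq : tle S y q := hsame γ hγM hγ2 y hy1 hy2
    have hzy : S.tlt z y := two_below (Or.inr hz) hy1 (by rw [hy2]; exact hγ1)
    rcases hyq with rfl | hyq
    · exact absurd hy2 (by rw [hq]; exact hγ2.ne')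
    · exact S.tlt_trans _ _ _ hzy hyq
  · have hzht : S.ht z < α := hq ▸ S.ht_mono _ _ hz
    obtain ⟨γ, hγM, hγ1, hγ2⟩ := hcof _ hzht
    obtain ⟨y, hy1, hy2⟩ := exists_tle_ht p (hp ▸ hγ2.le)
    have hyq : tle S y q := hsame γ hγM hγ2 y hy1 hy2
    have hzy : S.tlt z y := two_below (Or.inr hz) hyq (by rw [hy2]; exact hγ1)
    rcases hy1 with rfl | hy1
    · exact absurd hy2 (by rw [hp]; exact hγ2.ne')
    · exact S.tlt_trans _ _ _ hzy hy1


section Cardinality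
variable (hreg : κ.IsRegular) (hunc : Cardinal.aleph0 < κ)

lemma isRegular_lift (hreg : κ.IsRegular) : (Cardinal.lift.{1} κ).IsRegular := by
  constructor
  · simpa using hreg.1
  · rw [← Cardinal.lift_ord, ← Ordinal.lift_cof, hreg.cof_eq]

lemma small_of_mk_lt {A : Set Ordinal.{0}} (hsmall : Cardinal.mk ↥A < Cardinal.lift.{1} κ) :
    Small.{0} ↥A := by
  have h1 : Cardinal.mk ↥A < Cardinal.univ.{0,1} :=
    hsmall.trans (Cardinal.lift_lt_univ κ)
  obtain ⟨c', hc'⟩ := Cardinal.lt_univ.1 h1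
  have : Cardinal.lift.{0} (Cardinal.mk ↥A) = Cardinal.lift.{1} (Cardinal.mk c'.out) := by
    rw [Cardinal.mk_out]; simpa using hc'
  obtain ⟨e⟩ := Cardinal.lift_mk_eq'.1 this
  exact ⟨c'.out, ⟨e⟩⟩

/-- A `< κ`-sized set of ordinals `< κ.ord` is bounded strictly below `κ.ord`. -/
lemma small_bdd (hreg : κ.IsRegular) {A : Set Ordinal.{0}} (hA : ∀ a ∈ A, a < κ.ord)
    (hsmall : Cardinal.mk ↥A < Cardinal.lift.{1} κ) : ∃ γ < κ.ord, ∀ a ∈ A, a ≤ γ := by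
  have hsm : Small.{0} ↥A := small_of_mk_lt hsmall
  set g : Shrink.{0} ↥A → Ordinal.{0} := fun i => ((equivShrink ↥A).symm i : Ordinal) with hg
  have hmk : Cardinal.mk (Shrink.{0} ↥A) < κ := by
    have h3 : Cardinal.lift.{1} (Cardinal.mk (Shrink.{0} ↥A)) < Cardinal.lift.{1} κ := by
      calc Cardinal.lift.{1} (Cardinal.mk (Shrink.{0} ↥A))
          = Cardinal.lift.{0} (Cardinal.mk ↥A) := Cardinal.lift_mk_shrink'.{1, 0} ↥A
        _ = Cardinal.mk ↥A := Cardinal.lift_id' _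
        _ < Cardinal.lift.{1} κ := hsmall
    exact Cardinal.lift_lt.1 h3
  have hsup : iSup g < κ.ord := by
    refine Ordinal.iSup_lt_ord ?_ fun i => hA _ (Subtype.coe_prop _)
    rwa [hreg.cof_eq]
  refine ⟨iSup g, hsup, fun a ha => ?_⟩
  have : a = g (equivShrink ↥A ⟨a, ha⟩) := by simp [hg]
  rw [this]
  exact le_ciSup (Ordinal.bddAbove_range g) _

/-- The set of nodes of height `< β` is small. -/
lemma slice_small (hreg : κ.IsRegular) (S : LexKTree κ) {β : Ordinal} (hβ : β < κ.ord) :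
    Cardinal.mk ↥{x : S.X | S.ht x < β} < Cardinal.lift.{1} κ := by
  have hcov : {x : S.X | S.ht x < β} = ⋃ γ : ↥(Set.Iio β), {x : S.X | S.ht x = (γ : Ordinal)} := by
    ext x
    simp only [Set.mem_setOf_eq, Set.mem_iUnion]
    exact ⟨fun h => ⟨⟨S.ht x, h⟩, rfl⟩, fun ⟨γ, hγ⟩ => hγ ▸ γ.2⟩
  rw [hcov]
  have hreg' := isRegular_lift (κ := κ) hreg
  refine lt_of_le_of_lt (Cardinal.mk_iUnion_le _) (Cardinal.mul_lt_of_lt hreg'.1 ?_ ?_)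
  · calc Cardinal.mk ↥(Set.Iio β) = Cardinal.lift.{1} β.card := Ordinal.mk_Iio_ordinal β
      _ < Cardinal.lift.{1} κ := by
          rw [Cardinal.lift_lt]; exact Cardinal.lt_ord.1 hβ
  · refine Cardinal.iSup_lt_lift_of_isRegular.{1,0} hreg' ?_ ?_
    · rw [Cardinal.lift_id']
      calc Cardinal.mk ↥(Set.Iio β) = Cardinal.lift.{1} β.card := Ordinal.mk_Iio_ordinal β
        _ < Cardinal.lift.{1} κ := by
            rw [Cardinal.lift_lt]; exact Cardinal.lt_ord.1 hβ
    · intro γ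
      exact S.level_small _ (lt_trans γ.2 hβ)

lemma unbounded_mk (hreg : κ.IsRegular) {I : Set Ordinal.{0}} (hI : ∀ a ∈ I, a < κ.ord)
    (hu : ∀ β < κ.ord, ∃ α ∈ I, β < α) : Cardinal.lift.{1} κ ≤ Cardinal.mk ↥I := by
  by_contra hcon
  rw [not_le] at hcon
  obtain ⟨γ, hγ, hbd⟩ := small_bdd hreg hI hcon
  obtain ⟨α, hα, hγα⟩ := hu γ hγ
  exact absurd (hbd α hα) (not_le.2 hγα)

lemma exists_unbounded_fiber (hreg : κ.IsRegular) {P : Type 1}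
    (hP : Cardinal.mk P < Cardinal.lift.{1} κ)
    (I : Set Ordinal.{0}) (hI : ∀ a ∈ I, a < κ.ord) (hu : ∀ β < κ.ord, ∃ α ∈ I, β < α)
    (g : Ordinal → P) : ∃ p, ∀ β < κ.ord, ∃ α ∈ I, β < α ∧ g α = p := by
  by_contra hcon
  push_neg at hcon
  choose b hb1 hb2 using hcon
  have hA : ∀ a ∈ Set.range b, a < κ.ord := by rintro a ⟨p, rfl⟩; exact hb1 p
  have hsm : Cardinal.mk ↥(Set.range b) < Cardinal.lift.{1} κ :=
    lt_of_le_of_lt Cardinal.mk_range_le hP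
  obtain ⟨γ, hγ, hbd⟩ := small_bdd hreg hA hsm
  obtain ⟨α, hα, hγα⟩ := hu γ hγ
  exact hb2 (g α) α hα (lt_of_le_of_lt (hbd _ ⟨g α, rfl⟩) hγα) rfl

lemma step_closure (hreg : κ.IsRegular) (h : Ordinal → Ordinal)
    (hh : ∀ β < κ.ord, h β < κ.ord) {γ : Ordinal} (hγ : γ < κ.ord) :
    ∃ γ' < κ.ord, γ < γ' ∧ ∀ β < γ, h β < γ' := by
  have hA : ∀ a ∈ h '' Set.Iio γ, a < κ.ord := by
    rintro a ⟨β, hβ, rfl⟩; exact hh β (lt_trans hβ hγ)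
  have hsm : Cardinal.mk ↥(h '' Set.Iio γ) < Cardinal.lift.{1} κ := by
    refine lt_of_le_of_lt (Cardinal.mk_image_le) ?_
    calc Cardinal.mk ↥(Set.Iio γ) = Cardinal.lift.{1} γ.card := Ordinal.mk_Iio_ordinal γ
      _ < Cardinal.lift.{1} κ := by rw [Cardinal.lift_lt]; exact Cardinal.lt_ord.1 hγ
  obtain ⟨γ₁, hγ₁, hbd⟩ := small_bdd hreg hA hsm
  have hlim : Order.IsSuccLimit (Cardinal.ord κ) := Cardinal.isSuccLimit_ord hreg.1
  refine ⟨max γ₁ γ + 1, ?_, ?_, ?_⟩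
  · rw [Ordinal.add_one_eq_succ]
    exact hlim.succ_lt (max_lt hγ₁ hγ)
  · exact lt_of_le_of_lt (le_max_right _ _) (lt_add_one _)
  · intro β hβ
    exact lt_of_le_of_lt (le_trans (hbd _ ⟨β, hβ, rfl⟩) (le_max_left _ _)) (lt_add_one _)

lemma club_unbounded (hreg : κ.IsRegular) (hunc : Cardinal.aleph0 < κ)
    (h : Ordinal → Ordinal) (hh : ∀ β < κ.ord, h β < κ.ord)
    {β₀ : Ordinal} (hβ₀ : β₀ < κ.ord) :
    ∃ α, β₀ < α ∧ α < κ.ord ∧ Order.IsSuccLimit α ∧ ∀ β < α, h β < α := by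
  have hlim : Order.IsSuccLimit (Cardinal.ord κ) := Cardinal.isSuccLimit_ord hreg.1
  have h0 : β₀ + 1 < κ.ord := by
    rw [Ordinal.add_one_eq_succ]; exact hlim.succ_lt hβ₀
  have step : ∀ γ : {o : Ordinal // o < κ.ord}, ∃ γ' : {o : Ordinal // o < κ.ord},
      γ.1 < γ'.1 ∧ ∀ β < γ.1, h β < γ'.1 := by
    intro γ
    obtain ⟨γ', h1, h2, h3⟩ := step_closure hreg h hh γ.2
    exact ⟨⟨γ', h1⟩, h2, h3⟩
  choose st hst1 hst2 using step
  let g : ℕ → {o : Ordinal // o < κ.ord} := fun n => Nat.rec ⟨β₀ + 1, h0⟩ (fun _ p => st p) n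
  have hgsucc : ∀ n, (g n).1 < (g (n+1)).1 := fun n => hst1 (g n)
  have hbdd : BddAbove (Set.range fun n => (g n).1) := Ordinal.bddAbove_range _
  set α := ⨆ n, (g n).1 with hα
  have hle : ∀ n, (g n).1 ≤ α := fun n => le_ciSup hbdd n
  have hακ : α < κ.ord := by
    refine Ordinal.iSup_lt_ord ?_ fun n => (g n).2
    rw [hreg.cof_eq, Cardinal.mk_nat]
    exact hunc
  have hlt : ∀ β < α, ∃ n, β < (g n).1 := by
    intro β hβ
    rwa [hα, Ordinal.lt_iSup_iff] at hβ
  have hsuc : ∀ β < α, β + 1 < α := by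
    intro β hβ
    obtain ⟨n, hn⟩ := hlt β hβ
    calc β + 1 ≤ (g n).1 := by rwa [Ordinal.add_one_eq_succ, Order.succ_le_iff]
      _ < (g (n+1)).1 := hgsucc n
      _ ≤ α := hle (n+1)
  have hαlim : Order.IsSuccLimit α := by
    refine Ordinal.isSuccLimit_iff.2 ⟨fun h0' => ?_, Order.isSuccPrelimit_iff_succ_lt.2 fun a ha => ?_⟩
    · have := lt_of_lt_of_le (lt_add_one β₀) (hle 0)
      rw [h0'] at this
      exact absurd this (not_lt_zero (a := _))
    · rw [← Ordinal.add_one_eq_succ]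
      exact hsuc a ha
  refine ⟨α, lt_of_lt_of_le (lt_add_one β₀) (hle 0), hακ, hαlim, ?_⟩
  intro β hβ
  obtain ⟨n, hn⟩ := hlt β hβ
  exact lt_of_lt_of_le (hst2 (g n) β hn) (hle (n+1))

end Cardinality


section Main
variable (S T : LexKTree κ) (X : Set S.X) (Y : Set T.X) (π : S.X → T.X)

/-- heights below `α` correspond under `π`. -/
def compatAt (α : Ordinal) : Prop := ∀ x ∈ X, (S.ht x < α ↔ T.ht (π x) < α)

/-- the cones at level `α` match up under `π`. -/
def MatchAt (α : Ordinal) : Prop := ∀ s ∈ dcl S X, S.ht s = α →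
  ∃ t ∈ dcl T Y, T.ht t = α ∧ π '' cone S X s = cone T Y t

/-- two elements of a cone at level `α` whose images split at level `δ`. -/
def BadAt (α δ : Ordinal) : Prop := Y = Y ∧ ∃ s x x' r r', s ∈ dcl S X ∧ S.ht s = α ∧
  x ∈ cone S X s ∧ x' ∈ cone S X s ∧ T.llt (π x) (π x') ∧
  T.ht r = δ ∧ T.ht r' = δ ∧ r ≠ r' ∧ tle T r (π x) ∧ tle T r' (π x')

variable {S T X Y π}

lemma ht_ge_of_compat {α : Ordinal} (hcompat : compatAt S T X π α) {s x : S.X}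
    (hhs : S.ht s = α) (hx : x ∈ cone S X s) : α ≤ T.ht (π x) := by
  have h1 : α ≤ S.ht x := hhs ▸ tle_ht (tle_of_mem_cone hx)
  by_contra hlt
  exact absurd ((hcompat x hx.1).2 (not_le.1 hlt)) (not_lt.2 h1)

/-- In the absence of bad pairs, all images of a cone at a limit level `α`
lie above a single node of height `α`. -/
lemma cones_lined {α : Ordinal} (hlim : Order.IsSuccLimit α) (hcompat : compatAt S T X π α)
    (hnb : ∀ δ < α, ¬ BadAt S T X Y π α δ)
    {s : S.X} (hs : s ∈ dcl S X) (hhs : S.ht s = α) :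
    ∃ t, T.ht t = α ∧ ∀ w ∈ π '' cone S X s, tle T t w := by
  obtain ⟨x₀, hx₀⟩ := exists_mem_cone hs
  obtain ⟨t, ht1, ht2⟩ := exists_tle_ht (π x₀) (ht_ge_of_compat hcompat hhs hx₀)
  refine ⟨t, ht2, ?_⟩
  rintro w ⟨x, hx, rfl⟩
  -- the set of levels at which the predecessors of `π x₀` and `π x` differ
  set Δ : Set Ordinal := {δ | δ ≤ α ∧ ∃ y y', tle T y (π x₀) ∧ tle T y' (π x) ∧
    T.ht y = δ ∧ T.ht y' = δ ∧ y ≠ y'} with hΔdef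
  have hΔ : Δ = ∅ := by
    by_contra hne0
    have hne : Δ.Nonempty := Set.nonempty_iff_ne_empty.2 hne0
    set δ₀ := WellFounded.min Ordinal.lt_wf Δ hne with hδ₀def
    have hδ₀mem : δ₀ ∈ Δ := WellFounded.min_mem _ _ _
    have hmin : ∀ δ ∈ Δ, ¬ δ < δ₀ := fun δ hδ => WellFounded.not_lt_min _ _ hδ
    obtain ⟨hδ₀le, y, y', hy, hy', hhy, hhy', hne'⟩ := hδ₀mem
    have hnl : ¬ Order.IsSuccLimit δ₀ := by
      intro hl
      refine hne' (haus_cofinal hl hhy hhy' (Set.Iio δ₀) (fun β hβ => ?_) ?_)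
      · have hsl : β + 1 < δ₀ := by rw [Ordinal.add_one_eq_succ]; exact hl.succ_lt hβ
        exact ⟨β + 1, hsl, lt_add_one β, hsl⟩
      · intro γ hγ hγδ z hz hhz
        have hzx₀ : tle T z (π x₀) := tle_trans hz hy
        obtain ⟨z', hz'1, hz'2⟩ := exists_tle_ht (π x) (le_trans (le_trans hγδ.le hδ₀le)
          (ht_ge_of_compat hcompat hhs hx))
        have : z = z' := by
          by_contra hzz
          exact hmin γ ⟨le_trans hγδ.le hδ₀le, z, z', hzx₀, hz'1, hhz, hz'2, hzz⟩ hγδ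
        rw [this] at hhz ⊢
        exact Or.inr (two_below hz'1 hy' (by rw [hhz, hhy']; exact hγδ))
    have hδα : δ₀ < α := lt_of_le_of_ne hδ₀le (fun h => hnl (h ▸ hlim))
    rcases T.llt_total (π x₀) (π x) with heq | hlt | hlt
    · exact hne' (two_below_eq hy (heq ▸ hy') (hhy.trans hhy'.symm))
    · exact hnb δ₀ hδα ⟨rfl, s, x₀, x, y, y', hs, hhs, hx₀, hx, hlt, hhy, hhy', hne', hy, hy'⟩
    · exact hnb δ₀ hδα ⟨rfl, s, x, x₀, y', y, hs, hhs, hx, hx₀, hlt, hhy', hhy,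
        (Ne.symm hne'), hy', hy⟩
  obtain ⟨q, hq1, hq2⟩ := exists_tle_ht (π x) (ht_ge_of_compat hcompat hhs hx)
  have htq : t = q := by
    by_contra hne
    have : α ∈ Δ := ⟨le_rfl, t, q, ht1, hq1, ht2, hq2, hne⟩
    rw [hΔ] at this
    exact this
  exact htq ▸ hq1

/-- Combining the two one-sided alignment statements into a full match. -/
lemma matchAt_of_lined {ρ : T.X → S.X} (hbij : Set.BijOn π X Y) (hinv : Set.InvOn ρ π X Y)
    {α : Ordinal}
    (h1 : ∀ s ∈ dcl S X, S.ht s = α → ∃ t, T.ht t = α ∧ ∀ w ∈ π '' cone S X s, tle T t w)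
    (h2 : ∀ t ∈ dcl T Y, T.ht t = α → ∃ u, S.ht u = α ∧ ∀ z ∈ ρ '' cone T Y t, tle S u z) :
    MatchAt S T X Y π α := by
  intro s hs hhs
  obtain ⟨t, ht1, ht2⟩ := h1 s hs hhs
  obtain ⟨x₀, hx₀⟩ := exists_mem_cone hs
  have hw₀Y : π x₀ ∈ Y := hbij.mapsTo hx₀.1
  have htw₀ : tle T t (π x₀) := ht2 _ ⟨x₀, hx₀, rfl⟩
  have htdcl : t ∈ dcl T Y := by
    rcases htw₀ with h | h
    · exact ⟨π x₀, hw₀Y, Or.inl h.symm⟩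
    · exact ⟨π x₀, hw₀Y, Or.inr h⟩
  refine ⟨t, htdcl, ht1, ?_⟩
  have hsub : π '' cone S X s ⊆ cone T Y t := by
    rintro w ⟨x, hx, rfl⟩
    exact ⟨hbij.mapsTo hx.1, ht2 _ ⟨x, hx, rfl⟩⟩
  refine Set.Subset.antisymm hsub ?_
  obtain ⟨u, hu1, hu2⟩ := h2 t htdcl ht1
  have hx₀t : π x₀ ∈ cone T Y t := hsub ⟨x₀, hx₀, rfl⟩
  have hρ : ρ (π x₀) = x₀ := hinv.1 hx₀.1
  have hux₀ : tle S u x₀ := by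
    have := hu2 (ρ (π x₀)) ⟨π x₀, hx₀t, rfl⟩
    rwa [hρ] at this
  have hus : u = s := two_below_eq hux₀ (tle_of_mem_cone hx₀) (hu1.trans hhs.symm)
  rintro v hv
  obtain ⟨x, hxX, rfl⟩ := hbij.surjOn hv.1
  have hρx : ρ (π x) = x := hinv.1 hxX
  have hxu : tle S u x := by
    have := hu2 (ρ (π x)) ⟨π x, hv, rfl⟩
    rwa [hρx] at this
  exact ⟨x, ⟨hxX, hus ▸ hxu⟩, rfl⟩

end Main


section Main2
variable {S T : LexKTree κ} {X : Set S.X} {Y : Set T.X} {π : S.X → T.X}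

lemma tle_co {a b : S.X} (h : tle S a b) : a = b ∨ S.tlt a b := by
  rcases h with h | h
  · exact Or.inl h.symm
  · exact Or.inr h

lemma mem_dcl_of_tle_mem {a b : S.X} (h : tle S a b) (hb : b ∈ Y₀) : a ∈ dcl S Y₀ :=
  ⟨b, hb, tle_co h⟩

/-- cones are convex for the lexicographic order. -/
lemma cone_convex {s x x' x'' : S.X} (hx : x ∈ cone S X s) (hx'' : x'' ∈ cone S X s)
    (hx' : x' ∈ X) (l1 : S.llt x x') (l2 : S.llt x' x'') : x' ∈ cone S X s := by
  refine ⟨hx', ?_⟩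
  by_contra hns
  have hne : x' ≠ s := fun h => hns (Or.inl h)
  have hnlt : ¬ S.tlt s x' := fun h => hns (Or.inr h)
  by_cases hlt : S.tlt x' s
  · have h1 : tle S x' x := tle_trans (Or.inr hlt) hx.2
    rcases h1 with h | h
    · exact S.llt_irrefl x (h ▸ l1)
    · exact llt_asymm l1 (S.llt_of_tlt _ _ h)
  · rcases S.llt_total s x' with heq | h | h
    · exact hne heq.symm
    · exact llt_asymm l2
        (S.llt_coherent s x' x'' x' hnlt hlt (fun hh => hne hh.symm) h
          (tle_co hx''.2) (Or.inl rfl))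
    · exact llt_asymm l1
        (S.llt_coherent x' s x' x hlt hnlt hne h (Or.inl rfl) (tle_co hx.2))

/-- From an unbounded set of levels carrying bad pairs with a common split pair `r ≠ r'`,
we build a `κ`-chain, contradicting Aronszajnness. -/
lemma no_unbounded_bad (hreg : κ.IsRegular) (hbij : Set.BijOn π X Y)
    (hiso : ∀ x ∈ X, ∀ x' ∈ X, S.llt x x' ↔ T.llt (π x) (π x'))
    (I : Set Ordinal.{0}) (hI : ∀ a ∈ I, a < κ.ord) (hu : ∀ β < κ.ord, ∃ α ∈ I, β < α)
    {r r' : T.X} (hrr : r ≠ r') (hhr : T.ht r = T.ht r')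
    (hbad : ∀ α ∈ I, ∃ s x x', s ∈ dcl S X ∧ S.ht s = α ∧ x ∈ cone S X s ∧
      x' ∈ cone S X s ∧ T.llt (π x) (π x') ∧ tle T r (π x) ∧ tle T r' (π x')) : False := by
  have hinc1 : ¬ T.tlt r r' := fun h => absurd (T.ht_mono _ _ h) (by rw [hhr]; exact lt_irrefl _)
  have hinc2 : ¬ T.tlt r' r := fun h => absurd (T.ht_mono _ _ h) (by rw [hhr]; exact lt_irrefl _)
  choose sF xF xF' h1 h2 h3 h4 h5 h6 h7 using hbad
  have hpos : (0 : Ordinal) < κ.ord := (Cardinal.isSuccLimit_ord hreg.1).pos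
  obtain ⟨α₀, hα₀, _⟩ := hu 0 hpos
  have hllt_rr' : T.llt r r' := by
    rcases T.llt_total r r' with heq | h | h
    · exact absurd heq hrr
    · exact h
    · exact absurd (T.llt_coherent r' r (π (xF' α₀ hα₀)) (π (xF α₀ hα₀)) hinc2 hinc1
        (Ne.symm hrr) h (tle_co (h7 α₀ hα₀)) (tle_co (h6 α₀ hα₀)))
        (fun hc => llt_asymm hc (h5 α₀ hα₀))
  have key : ∀ α (hα : α ∈ I) β (hβ : β ∈ I), α < β → S.tlt (sF α hα) (sF β hβ) := by
    intro α hα β hβ hαβ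
    have hz : ∃ z, z ∈ cone S X (sF α hα) ∧ z ∈ cone S X (sF β hβ) := by
      rcases T.llt_total (π (xF α hα)) (π (xF β hβ)) with heq | h | h
      · have : xF α hα = xF β hβ := hbij.injOn (h3 α hα).1 (h3 β hβ).1 heq
        exact ⟨xF α hα, h3 α hα, this ▸ h3 β hβ⟩
      · have h8 : T.llt (π (xF β hβ)) (π (xF' α hα)) :=
          T.llt_coherent r r' _ _ hinc1 hinc2 hrr hllt_rr'
            (tle_co (h6 β hβ)) (tle_co (h7 α hα))
        have l1 : S.llt (xF α hα) (xF β hβ) := (hiso _ (h3 α hα).1 _ (h3 β hβ).1).2 h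
        have l2 : S.llt (xF β hβ) (xF' α hα) := (hiso _ (h3 β hβ).1 _ (h4 α hα).1).2 h8
        exact ⟨xF β hβ, cone_convex (h3 α hα) (h4 α hα) (h3 β hβ).1 l1 l2, h3 β hβ⟩
      · have h8 : T.llt (π (xF α hα)) (π (xF' β hβ)) :=
          T.llt_coherent r r' _ _ hinc1 hinc2 hrr hllt_rr'
            (tle_co (h6 α hα)) (tle_co (h7 β hβ))
        have l1 : S.llt (xF β hβ) (xF α hα) := (hiso _ (h3 β hβ).1 _ (h3 α hα).1).2 h
        have l2 : S.llt (xF α hα) (xF' β hβ) := (hiso _ (h3 α hα).1 _ (h4 β hβ).1).2 h8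
        exact ⟨xF α hα, h3 α hα, cone_convex (h3 β hβ) (h4 β hβ) (h3 α hα).1 l1 l2⟩
    obtain ⟨z, hz1, hz2⟩ := hz
    have hht : β ≤ S.ht z := by
      have := tle_ht (tle_of_mem_cone hz2); rwa [h2 β hβ] at this
    have h9 : S.tlt (sF α hα) z := by
      rcases tle_of_mem_cone hz1 with hzz | hzz
      · exact absurd (le_trans hht (le_of_eq (by rw [hzz, h2 α hα]))) (not_le.2 hαβ)
      · exact hzz
    rcases tle_of_mem_cone hz2 with hzz | hzz
    · exact hzz ▸ h9
    · exact two_below (Or.inr h9) (Or.inr hzz) (by rw [h2 α hα, h2 β hβ]; exact hαβ)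
  apply S.aronszajn
  refine ⟨{z | ∃ α, ∃ hα : α ∈ I, z = sF α hα}, ?_, ?_⟩
  · rintro a ⟨α, hα, rfl⟩ c ⟨β, hβ, rfl⟩
    rcases lt_trichotomy α β with h | h | h
    · exact Or.inr (Or.inl (key α hα β hβ h))
    · subst h; exact Or.inl rfl
    · exact Or.inr (Or.inr (key β hβ α hα h))
  · refine le_trans (unbounded_mk hreg hI hu) (Cardinal.mk_le_of_injective
      (f := fun a : ↥I => (⟨sF a.1 a.2, ⟨a.1, a.2, rfl⟩⟩ :
        ↥{z | ∃ α, ∃ hα : α ∈ I, z = sF α hα})) ?_)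
    rintro ⟨a, ha⟩ ⟨b, hb⟩ hab
    simp only [Subtype.mk_eq_mk] at hab ⊢
    have := congrArg S.ht hab
    rw [h2 a ha, h2 b hb] at this
    exact this

/-- Matching propagates to limits of matching levels. -/
lemma matchAt_limit (hbij : Set.BijOn π X Y) {ρ : T.X → S.X} (hinv : Set.InvOn ρ π X Y)
    {α : Ordinal} (hlim : Order.IsSuccLimit α) (hcompat : compatAt S T X π α)
    (M : Set Ordinal) (hM1 : ∀ γ ∈ M, γ < α) (hcof : ∀ β < α, ∃ γ ∈ M, β < γ)
    (hmatch : ∀ γ ∈ M, MatchAt S T X Y π γ) : MatchAt S T X Y π α := by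
  intro s hs hhs
  obtain ⟨x₀, hx₀⟩ := exists_mem_cone hs
  have hsγ : ∀ γ (hγ : γ ∈ M), ∃ sγ, tle S sγ s ∧ S.ht sγ = γ := fun γ hγ =>
    exists_tle_ht s (by rw [hhs]; exact (hM1 γ hγ).le)
  choose sg hsg1 hsg2 using hsγ
  have hmt : ∀ γ (hγ : γ ∈ M), ∃ t ∈ dcl T Y, T.ht t = γ ∧
      π '' cone S X (sg γ hγ) = cone T Y t := fun γ hγ =>
    hmatch γ hγ _ (mem_dcl_of_tle (hsg1 γ hγ) hs) (hsg2 γ hγ)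
  choose tg htg1 htg2 htg3 using hmt
  have hxcone : ∀ γ (hγ : γ ∈ M), x₀ ∈ cone S X (sg γ hγ) := fun γ hγ =>
    cone_mono (hsg1 γ hγ) hx₀
  have hwtg : ∀ γ (hγ : γ ∈ M), tle T (tg γ hγ) (π x₀) := fun γ hγ => by
    have : π x₀ ∈ cone T Y (tg γ hγ) := (htg3 γ hγ) ▸ ⟨x₀, hxcone γ hγ, rfl⟩
    exact tle_of_mem_cone this
  obtain ⟨t, htle, htht⟩ := exists_tle_ht (π x₀) (ht_ge_of_compat hcompat hhs hx₀)
  have htg_t : ∀ γ (hγ : γ ∈ M), tle T (tg γ hγ) t := fun γ hγ =>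
    Or.inr (two_below (hwtg γ hγ) htle (by rw [htg2 γ hγ, htht]; exact hM1 γ hγ))
  have htdcl : t ∈ dcl T Y := mem_dcl_of_tle_mem htle (hbij.mapsTo hx₀.1)
  refine ⟨t, htdcl, htht, Set.Subset.antisymm ?_ ?_⟩
  · rintro w ⟨x, hx, rfl⟩
    obtain ⟨q, hq1, hq2⟩ := exists_tle_ht (π x) (ht_ge_of_compat hcompat hhs hx)
    have htgq : ∀ γ (hγ : γ ∈ M), tle T (tg γ hγ) q := fun γ hγ => by
      have hxγ : x ∈ cone S X (sg γ hγ) := cone_mono (hsg1 γ hγ) hx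
      have hmem : π x ∈ cone T Y (tg γ hγ) := (htg3 γ hγ) ▸ ⟨x, hxγ, rfl⟩
      exact Or.inr (two_below (tle_of_mem_cone hmem) hq1
        (by rw [htg2 γ hγ, hq2]; exact hM1 γ hγ))
    have hqt : q = t := by
      refine haus_cofinal hlim hq2 htht M (fun β hβ => ?_) ?_
      · obtain ⟨γ, hγ, hβγ⟩ := hcof β hβ
        exact ⟨γ, hγ, hβγ, hM1 γ hγ⟩
      · intro γ hγ hγα y hy hhy
        have : y = tg γ hγ := two_below_eq hy (htgq γ hγ) (by rw [hhy, htg2 γ hγ])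
        exact this ▸ htg_t γ hγ
    exact ⟨hbij.mapsTo hx.1, hqt ▸ hq1⟩
  · rintro v hv
    obtain ⟨x, hxX, rfl⟩ := hbij.surjOn hv.1
    have hxcγ : ∀ γ (hγ : γ ∈ M), x ∈ cone S X (sg γ hγ) := fun γ hγ => by
      have hvγ : π x ∈ cone T Y (tg γ hγ) :=
        ⟨hv.1, tle_trans (htg_t γ hγ) (tle_of_mem_cone hv)⟩
      rw [← htg3 γ hγ] at hvγ
      obtain ⟨x', hx', hx'eq⟩ := hvγ
      exact (hbij.injOn hx'.1 hxX hx'eq) ▸ hx'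
    have hhtx : α ≤ S.ht x := by
      by_contra hlt
      obtain ⟨γ, hγ, hβγ⟩ := hcof _ (not_le.1 hlt)
      exact absurd (tle_ht (tle_of_mem_cone (hxcγ γ hγ)))
        (by rw [hsg2 γ hγ]; exact not_le.2 hβγ)
    obtain ⟨p, hp1, hp2⟩ := exists_tle_ht x hhtx
    have hsgp : ∀ γ (hγ : γ ∈ M), tle S (sg γ hγ) p := fun γ hγ =>
      Or.inr (two_below (tle_of_mem_cone (hxcγ γ hγ)) hp1
        (by rw [hsg2 γ hγ, hp2]; exact hM1 γ hγ))
    have hps : p = s := by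
      refine haus_cofinal hlim hp2 hhs M (fun β hβ => ?_) ?_
      · obtain ⟨γ, hγ, hβγ⟩ := hcof β hβ
        exact ⟨γ, hγ, hβγ, hM1 γ hγ⟩
      · intro γ hγ hγα y hy hhy
        have : y = sg γ hγ := two_below_eq hy (hsgp γ hγ) (by rw [hhy, hsg2 γ hγ])
        exact this ▸ (hsg1 γ hγ)
    exact ⟨x, ⟨hxX, hps ▸ hp1⟩, rfl⟩

end Main2


section Main3
variable {S T : LexKTree κ} {X : Set S.X} {Y : Set T.X} {π : S.X → T.X} {ρ : T.X → S.X}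

/-- the good levels: limit, height-compatible, and matching in both directions. -/
def goodSet (S : LexKTree κ) (T : LexKTree κ) (X : Set S.X) (Y : Set T.X)
    (π : S.X → T.X) (ρ : T.X → S.X) : Set Ordinal :=
  {α | α < κ.ord ∧ Order.IsSuccLimit α ∧ compatAt S T X π α ∧ MatchAt S T X Y π α ∧ MatchAt T S Y X ρ α}

lemma compat_symm (hbij : Set.BijOn π X Y) (hinv : Set.InvOn ρ π X Y) {α : Ordinal}
    (hcompat : compatAt S T X π α) : compatAt T S Y ρ α := by
  intro y hy
  obtain ⟨x, hx, rfl⟩ := hbij.surjOn hy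
  rw [hinv.1 hx]
  exact (hcompat x hx).symm

lemma iso_symm (hbij : Set.BijOn π X Y) (hinv : Set.InvOn ρ π X Y)
    (hiso : ∀ x ∈ X, ∀ x' ∈ X, S.llt x x' ↔ T.llt (π x) (π x')) :
    ∀ y ∈ Y, ∀ y' ∈ Y, T.llt y y' ↔ S.llt (ρ y) (ρ y') := by
  intro y hy y' hy'
  obtain ⟨x, hx, rfl⟩ := hbij.surjOn hy
  obtain ⟨x', hx', rfl⟩ := hbij.surjOn hy'
  rw [hinv.1 hx, hinv.1 hx']
  exact (hiso x hx x' hx').symm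

/-- The good levels are unbounded in `κ.ord`. -/
lemma good_unbounded (hreg : κ.IsRegular) (hunc : Cardinal.aleph0 < κ)
    (hbij : Set.BijOn π X Y) (hinv : Set.InvOn ρ π X Y)
    (hiso : ∀ x ∈ X, ∀ x' ∈ X, S.llt x x' ↔ T.llt (π x) (π x'))
    {β₀ : Ordinal} (hβ₀ : β₀ < κ.ord) :
    ∃ α ∈ goodSet S T X Y π ρ, β₀ < α := by
  classical
  have hbij' : Set.BijOn ρ Y X :=
    Set.InvOn.bijOn ⟨hinv.2, hinv.1⟩ (fun y hy => by
      obtain ⟨x, hx, rfl⟩ := hbij.surjOn hy; rw [hinv.1 hx]; exact hx) hbij.mapsTo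
  have hiso' := iso_symm hbij hinv hiso
  -- height-compatibility closure functions
  have hFex : ∀ β : Ordinal, ∃ γ, β < κ.ord →
      (γ < κ.ord ∧ ∀ x ∈ X, S.ht x < β → T.ht (π x) ≤ γ) := by
    intro β
    by_cases hβ : β < κ.ord
    · have hA : ∀ a ∈ (fun x => T.ht (π x)) '' {x | x ∈ X ∧ S.ht x < β}, a < κ.ord := by
        rintro a ⟨x, _, rfl⟩; exact T.ht_lt _
      have hsm : Cardinal.mk ↥((fun x => T.ht (π x)) '' {x | x ∈ X ∧ S.ht x < β}) <
          Cardinal.lift.{1} κ :=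
        lt_of_le_of_lt (le_trans Cardinal.mk_image_le
          (Cardinal.mk_le_mk_of_subset (fun x hx => hx.2))) (slice_small hreg S hβ)
      obtain ⟨γ, hγ1, hγ2⟩ := small_bdd hreg hA hsm
      exact ⟨γ, fun _ => ⟨hγ1, fun x hx hxβ => hγ2 _ ⟨x, ⟨hx, hxβ⟩, rfl⟩⟩⟩
    · exact ⟨0, fun h => absurd h hβ⟩
  have hGex : ∀ β : Ordinal, ∃ γ, β < κ.ord →
      (γ < κ.ord ∧ ∀ x ∈ X, T.ht (π x) < β → S.ht x ≤ γ) := by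
    intro β
    by_cases hβ : β < κ.ord
    · have hA : ∀ a ∈ S.ht '' {x | x ∈ X ∧ T.ht (π x) < β}, a < κ.ord := by
        rintro a ⟨x, _, rfl⟩; exact S.ht_lt _
      have hsm : Cardinal.mk ↥(S.ht '' {x | x ∈ X ∧ T.ht (π x) < β}) <
          Cardinal.lift.{1} κ := by
        refine lt_of_le_of_lt Cardinal.mk_image_le (lt_of_le_of_lt ?_ (slice_small hreg T hβ))
        refine Cardinal.mk_le_of_injective
          (f := fun x : ↥{x | x ∈ X ∧ T.ht (π x) < β} =>
            (⟨π x.1, x.2.2⟩ : ↥{y : T.X | T.ht y < β})) ?_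
        rintro ⟨a, ha⟩ ⟨b, hb⟩ hab
        simp only [Subtype.mk_eq_mk] at hab ⊢
        exact hbij.injOn ha.1 hb.1 hab
      obtain ⟨γ, hγ1, hγ2⟩ := small_bdd hreg hA hsm
      exact ⟨γ, fun _ => ⟨hγ1, fun x hx hxβ => hγ2 _ ⟨x, ⟨hx, hxβ⟩, rfl⟩⟩⟩
    · exact ⟨0, fun h => absurd h hβ⟩
  choose F hF using hFex
  choose G hG using hGex
  -- first case : an unbounded fiber of bad levels in the forward direction
  by_cases hc1 : ∃ δ, ∀ β < κ.ord, ∃ α, (α < κ.ord ∧ δ < α ∧ BadAt S T X Y π α δ) ∧ β < α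
  · exfalso
    obtain ⟨δ, hδ⟩ := hc1
    set I : Set Ordinal := {α | α < κ.ord ∧ δ < α ∧ BadAt S T X Y π α δ} with hIdef
    have hI : ∀ a ∈ I, a < κ.ord := fun a ha => ha.1
    have hu : ∀ β < κ.ord, ∃ α ∈ I, β < α := fun β hβ => by
      obtain ⟨α, h1, h2⟩ := hδ β hβ; exact ⟨α, h1, h2⟩
    have hδκ : δ < κ.ord := by
      obtain ⟨α, hα, _⟩ := hu 0 (Cardinal.isSuccLimit_ord hreg.1).pos
      exact lt_trans hα.2.1 hα.1
    set P := (↥{r : T.X | T.ht r = δ} × ↥{r : T.X | T.ht r = δ}) with hPdef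
    have hP : Cardinal.mk P < Cardinal.lift.{1} κ := by
      rw [hPdef, Cardinal.mk_prod, Cardinal.lift_id]
      exact Cardinal.mul_lt_of_lt (isRegular_lift hreg).1
        (T.level_small δ hδκ) (T.level_small δ hδκ)
    obtain ⟨r₀, hr₀⟩ := T.level_ne δ hδκ
    have hpair : ∀ α ∈ I, ∃ p : P, (p.1 : T.X) ≠ (p.2 : T.X) ∧
        ∃ s x x', s ∈ dcl S X ∧ S.ht s = α ∧ x ∈ cone S X s ∧ x' ∈ cone S X s ∧
        T.llt (π x) (π x') ∧ tle T (p.1 : T.X) (π x) ∧ tle T (p.2 : T.X) (π x') := by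
      intro α hα
      obtain ⟨_, s, x, x', r, r', hst⟩ := hα.2.2
      obtain ⟨hs1, hs2, hs3, hs4, hs5, hs6, hs7, hs8, hs9, hs10⟩ := hst
      exact ⟨⟨⟨r, hs6⟩, ⟨r', hs7⟩⟩, hs8, s, x, x', hs1, hs2, hs3, hs4, hs5, hs9, hs10⟩
    choose pF hpF using hpair
    have : Nonempty P := ⟨⟨⟨r₀, hr₀⟩, ⟨r₀, hr₀⟩⟩⟩
    obtain ⟨p, hp⟩ := exists_unbounded_fiber hreg hP I hI hu
      (fun α => if h : α ∈ I then pF α h else Classical.arbitrary P)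
    set I2 : Set Ordinal :=
      {α | α ∈ I ∧ (if h : α ∈ I then pF α h else Classical.arbitrary P) = p} with hI2def
    have hI2 : ∀ a ∈ I2, a < κ.ord := fun a ha => hI a ha.1
    have hu2 : ∀ β < κ.ord, ∃ α ∈ I2, β < α := fun β hβ => by
      obtain ⟨α, hα1, hα2, hα3⟩ := hp β hβ; exact ⟨α, ⟨hα1, hα3⟩, hα2⟩
    refine no_unbounded_bad hreg hbij hiso I2 hI2 hu2
      (r := (p.1 : T.X)) (r' := (p.2 : T.X)) ?_ (by rw [p.1.2, p.2.2]) ?_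
    · obtain ⟨α, hα, _⟩ := hu2 0 (Cardinal.isSuccLimit_ord hreg.1).pos
      have hgα : pF α hα.1 = p := by
        have := hα.2; rwa [dif_pos hα.1] at this
      exact hgα ▸ (hpF α hα.1).1
    · intro α hα
      have hgα : pF α hα.1 = p := by
        have := hα.2; rwa [dif_pos hα.1] at this
      exact hgα ▸ (hpF α hα.1).2
  · by_cases hc2 : ∃ δ, ∀ β < κ.ord, ∃ α, (α < κ.ord ∧ δ < α ∧ BadAt T S Y X ρ α δ) ∧ β < α
    · exfalso
      obtain ⟨δ, hδ⟩ := hc2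
      set I : Set Ordinal := {α | α < κ.ord ∧ δ < α ∧ BadAt T S Y X ρ α δ} with hIdef
      have hI : ∀ a ∈ I, a < κ.ord := fun a ha => ha.1
      have hu : ∀ β < κ.ord, ∃ α ∈ I, β < α := fun β hβ => by
        obtain ⟨α, h1, h2⟩ := hδ β hβ; exact ⟨α, h1, h2⟩
      have hδκ : δ < κ.ord := by
        obtain ⟨α, hα, _⟩ := hu 0 (Cardinal.isSuccLimit_ord hreg.1).pos
        exact lt_trans hα.2.1 hα.1
      set P := (↥{r : S.X | S.ht r = δ} × ↥{r : S.X | S.ht r = δ}) with hPdef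
      have hP : Cardinal.mk P < Cardinal.lift.{1} κ := by
        rw [hPdef, Cardinal.mk_prod, Cardinal.lift_id]
        exact Cardinal.mul_lt_of_lt (isRegular_lift hreg).1
          (S.level_small δ hδκ) (S.level_small δ hδκ)
      obtain ⟨r₀, hr₀⟩ := S.level_ne δ hδκ
      have hpair : ∀ α ∈ I, ∃ p : P, (p.1 : S.X) ≠ (p.2 : S.X) ∧
          ∃ s x x', s ∈ dcl T Y ∧ T.ht s = α ∧ x ∈ cone T Y s ∧ x' ∈ cone T Y s ∧
          S.llt (ρ x) (ρ x') ∧ tle S (p.1 : S.X) (ρ x) ∧ tle S (p.2 : S.X) (ρ x') := by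
        intro α hα
        obtain ⟨_, s, x, x', r, r', hst⟩ := hα.2.2
        obtain ⟨hs1, hs2, hs3, hs4, hs5, hs6, hs7, hs8, hs9, hs10⟩ := hst
        exact ⟨⟨⟨r, hs6⟩, ⟨r', hs7⟩⟩, hs8, s, x, x', hs1, hs2, hs3, hs4, hs5, hs9, hs10⟩
      choose pF hpF using hpair
      have : Nonempty P := ⟨⟨⟨r₀, hr₀⟩, ⟨r₀, hr₀⟩⟩⟩
      obtain ⟨p, hp⟩ := exists_unbounded_fiber hreg hP I hI hu
        (fun α => if h : α ∈ I then pF α h else Classical.arbitrary P)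
      set I2 : Set Ordinal :=
        {α | α ∈ I ∧ (if h : α ∈ I then pF α h else Classical.arbitrary P) = p} with hI2def
      have hI2 : ∀ a ∈ I2, a < κ.ord := fun a ha => hI a ha.1
      have hu2 : ∀ β < κ.ord, ∃ α ∈ I2, β < α := fun β hβ => by
        obtain ⟨α, hα1, hα2, hα3⟩ := hp β hβ; exact ⟨α, ⟨hα1, hα3⟩, hα2⟩
      refine no_unbounded_bad hreg hbij' hiso' I2 hI2 hu2
        (r := (p.1 : S.X)) (r' := (p.2 : S.X)) ?_ (by rw [p.1.2, p.2.2]) ?_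
      · obtain ⟨α, hα, _⟩ := hu2 0 (Cardinal.isSuccLimit_ord hreg.1).pos
        have hgα : pF α hα.1 = p := by
          have := hα.2; rwa [dif_pos hα.1] at this
        exact hgα ▸ (hpF α hα.1).1
      · intro α hα
        have hgα : pF α hα.1 = p := by
          have := hα.2; rwa [dif_pos hα.1] at this
        exact hgα ▸ (hpF α hα.1).2
    · -- all fibers bounded : closure argument
      push_neg at hc1 hc2
      have hb1 : ∀ δ : Ordinal, ∃ b, b < κ.ord ∧
          ∀ α, α < κ.ord → δ < α → BadAt S T X Y π α δ → α ≤ b := by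
        intro δ
        obtain ⟨β, hβ1, hβ2⟩ := hc1 δ
        exact ⟨β, hβ1, fun α h1 h2 h3 => hβ2 α ⟨h1, h2, h3⟩⟩
      have hb2 : ∀ δ : Ordinal, ∃ b, b < κ.ord ∧
          ∀ α, α < κ.ord → δ < α → BadAt T S Y X ρ α δ → α ≤ b := by
        intro δ
        obtain ⟨β, hβ1, hβ2⟩ := hc2 δ
        exact ⟨β, hβ1, fun α h1 h2 h3 => hβ2 α ⟨h1, h2, h3⟩⟩
      choose b1 hb1a hb1b using hb1
      choose b2 hb2a hb2b using hb2
      set h : Ordinal → Ordinal := fun β => max (F β) (max (G β) (max (b1 β) (b2 β)))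
      have hh : ∀ β < κ.ord, h β < κ.ord := by
        intro β hβ
        exact max_lt ((hF β hβ).1) (max_lt ((hG β hβ).1) (max_lt (hb1a β) (hb2a β)))
      obtain ⟨α, hβ₀α, hακ, hlim, hcl⟩ := club_unbounded hreg hunc h hh hβ₀
      -- compatibility at α
      have hcompat : compatAt S T X π α := by
        intro x hx
        constructor
        · intro hxα
          have hsucc : S.ht x + 1 < α := by
            rw [Ordinal.add_one_eq_succ]; exact hlim.succ_lt hxα
          have := (hF (S.ht x + 1) (lt_trans hsucc hακ)).2 x hx (lt_add_one _)
          calc T.ht (π x) ≤ F (S.ht x + 1) := this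
            _ ≤ h (S.ht x + 1) := le_max_left _ _
            _ < α := hcl _ hsucc
        · intro hxα
          have hsucc : T.ht (π x) + 1 < α := by
            rw [Ordinal.add_one_eq_succ]; exact hlim.succ_lt hxα
          have := (hG (T.ht (π x) + 1) (lt_trans hsucc hακ)).2 x hx (lt_add_one _)
          calc S.ht x ≤ G (T.ht (π x) + 1) := this
            _ ≤ h (T.ht (π x) + 1) := le_max_of_le_right (le_max_left _ _)
            _ < α := hcl _ hsucc
      have hcompat' : compatAt T S Y ρ α := compat_symm hbij hinv hcompat
      have hnb1 : ∀ δ < α, ¬ BadAt S T X Y π α δ := by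
        intro δ hδ hbad
        have h1 := hb1b δ α hακ hδ hbad
        have h2 : b1 δ ≤ h δ := le_max_of_le_right (le_max_of_le_right (le_max_left _ _))
        exact absurd (lt_of_le_of_lt (le_trans h1 h2) (hcl δ hδ)) (lt_irrefl α)
      have hnb2 : ∀ δ < α, ¬ BadAt T S Y X ρ α δ := by
        intro δ hδ hbad
        have h1 := hb2b δ α hακ hδ hbad
        have h2 : b2 δ ≤ h δ := le_max_of_le_right (le_max_of_le_right (le_max_right _ _))
        exact absurd (lt_of_le_of_lt (le_trans h1 h2) (hcl δ hδ)) (lt_irrefl α)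
      have m1 : MatchAt S T X Y π α :=
        matchAt_of_lined hbij hinv
          (fun s hs hhs => cones_lined hlim hcompat hnb1 hs hhs)
          (fun t ht hht => cones_lined hlim hcompat' hnb2 ht hht)
      have m2 : MatchAt T S Y X ρ α :=
        matchAt_of_lined hbij' ⟨hinv.2, hinv.1⟩
          (fun t ht hht => cones_lined hlim hcompat' hnb2 ht hht)
          (fun s hs hhs => cones_lined hlim hcompat hnb1 hs hhs)
      exact ⟨α, ⟨hακ, hlim, hcompat, m1, m2⟩, hβ₀α⟩

end Main3


section Main4
variable {S T : LexKTree κ} {X : Set S.X} {Y : Set T.X} {π : S.X → T.X}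

lemma cone_unique {t t' : S.X} (h : cone S X t = cone S X t')
    (hdcl : t ∈ dcl S X) (hh : S.ht t = S.ht t') : t = t' := by
  obtain ⟨w, hw⟩ := exists_mem_cone hdcl
  have hw' : w ∈ cone S X t' := h ▸ hw
  exact two_below_eq (tle_of_mem_cone hw) (tle_of_mem_cone hw') hh

lemma image_subset_cancel {A B : Set S.X} (hA : A ⊆ X) (hB : B ⊆ X) (hinj : Set.InjOn π X)
    (h : π '' A ⊆ π '' B) : A ⊆ B := by
  intro a ha
  obtain ⟨b, hb, hba⟩ := h ⟨a, ha, rfl⟩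
  rwa [← hinj (hB hb) (hA ha) hba]

end Main4

end S15

open S15 in
/-- If `π : (X,<_lS) → (Y,<_lT)` is an order isomorphism between `κ`-sized subsets of two
lexicographically ordered Hausdorff `κ`-Aronszajn trees, then on a club `C` of levels the
downward closures `X_↓↾C` and `Y_↓↾C` are isomorphic as trees and as lexicographic orders,
by a map agreeing with `π`. -/
theorem stmt15 (κ : Cardinal.{0}) (hreg : κ.IsRegular) (hunc : Cardinal.aleph0 < κ)
    (S T : LexKTree κ) (X : Set S.X) (Y : Set T.X)
    (hX : Cardinal.mk ↥X = Cardinal.lift.{1} κ) (hY : Cardinal.mk ↥Y = Cardinal.lift.{1} κ)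
    (π : S.X → T.X) (hπ : Set.BijOn π X Y)
    (hπiso : ∀ x ∈ X, ∀ x' ∈ X, S.llt x x' ↔ T.llt (π x) (π x')) :
    ∃ C : Set Ordinal, ClubIn C κ.ord ∧ ∃ f : S.X → T.X,
      (∀ x, (∃ x' ∈ X, x = x' ∨ S.tlt x x') ∧ S.ht x ∈ C →
        (∃ y' ∈ Y, f x = y' ∨ T.tlt (f x) y') ∧ T.ht (f x) ∈ C) ∧
      Set.BijOn f {x | (∃ x' ∈ X, x = x' ∨ S.tlt x x') ∧ S.ht x ∈ C}
        {y | (∃ y' ∈ Y, y = y' ∨ T.tlt y y') ∧ T.ht y ∈ C} ∧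
      (∀ x ∈ {x | (∃ x' ∈ X, x = x' ∨ S.tlt x x') ∧ S.ht x ∈ C},
       ∀ x' ∈ {x | (∃ x' ∈ X, x = x' ∨ S.tlt x x') ∧ S.ht x ∈ C},
        (S.tlt x x' ↔ T.tlt (f x) (f x')) ∧ (S.llt x x' ↔ T.llt (f x) (f x'))) ∧
      (∀ x ∈ {x | (∃ x' ∈ X, x = x' ∨ S.tlt x x') ∧ S.ht x ∈ C},
        π '' {z ∈ X | z = x ∨ S.tlt x z} = {w ∈ Y | w = f x ∨ T.tlt (f x) w}) := by
  classical
  have hpos : (0 : Ordinal) < κ.ord := (Cardinal.isSuccLimit_ord hreg.1).pos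
  obtain ⟨x₀₀, _⟩ := S.level_ne 0 hpos
  haveI : Nonempty S.X := ⟨x₀₀⟩
  set ρ : T.X → S.X := Function.invFunOn π X with hρdef
  have hinv : Set.InvOn ρ π X Y := hπ.invOn_invFunOn
  have hbij' : Set.BijOn ρ Y X :=
    Set.InvOn.bijOn ⟨hinv.2, hinv.1⟩ (fun y hy => by
      obtain ⟨x, hx, rfl⟩ := hπ.surjOn hy; rw [hinv.1 hx]; exact hx) hπ.mapsTo
  set C : Set Ordinal := goodSet S T X Y π ρ with hCdef
  have hclub : ClubIn C κ.ord := by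
    refine ⟨fun α hα => hα.1, ?_, ?_⟩
    · intro β hβ
      obtain ⟨α, hα, hβα⟩ := good_unbounded hreg hunc hπ hinv hπiso hβ
      exact ⟨α, hα, hβα.le⟩
    · intro β hβκ hβ0 hsup
      have hbdd : BddAbove (C ∩ Set.Iio β) := ⟨β, fun x hx => hx.2.le⟩
      have hne2 : (C ∩ Set.Iio β).Nonempty := by
        by_contra hc
        rw [Set.not_nonempty_iff_eq_empty] at hc
        rw [hc, csSup_empty] at hsup
        exact absurd hsup.symm (ne_of_gt hβ0)
      have hcof : ∀ γ < β, ∃ d ∈ C ∩ Set.Iio β, γ < d := by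
        intro γ hγ
        exact (lt_csSup_iff hbdd hne2).1 (by rw [hsup]; exact hγ)
      have hlim : Order.IsSuccLimit β := by
        refine Ordinal.isSuccLimit_iff.2 ⟨ne_of_gt hβ0, Order.isSuccPrelimit_iff_succ_lt.2 ?_⟩
        intro a ha
        obtain ⟨d, hd, had⟩ := hcof a ha
        exact lt_of_le_of_lt (Order.succ_le_iff.2 had) hd.2
      have hcompat : compatAt S T X π β := by
        intro x hx
        constructor
        · intro h
          obtain ⟨d, hd, hxd⟩ := hcof _ h
          exact lt_trans ((hd.1.2.2.1 x hx).1 hxd) hd.2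
        · intro h
          obtain ⟨d, hd, hxd⟩ := hcof _ h
          exact lt_trans ((hd.1.2.2.1 x hx).2 hxd) hd.2
      have hM1 : ∀ γ ∈ C ∩ Set.Iio β, γ < β := fun γ hγ => hγ.2
      have m1 := matchAt_limit hπ hinv hlim hcompat (C ∩ Set.Iio β) hM1
        hcof (fun γ hγ => hγ.1.2.2.2.1)
      have m2 := matchAt_limit hbij' ⟨hinv.2, hinv.1⟩ hlim (compat_symm hπ hinv hcompat)
        (C ∩ Set.Iio β) hM1 hcof (fun γ hγ => hγ.1.2.2.2.2)
      exact ⟨hβκ, hlim, hcompat, m1, m2⟩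
  have hex : ∀ s : S.X, ∃ t : T.X, (s ∈ dcl S X ∧ S.ht s ∈ C) →
      t ∈ dcl T Y ∧ T.ht t = S.ht s ∧ π '' cone S X s = cone T Y t := by
    intro s
    by_cases h : s ∈ dcl S X ∧ S.ht s ∈ C
    · obtain ⟨t, h1, h2, h3⟩ := h.2.2.2.2.1 s h.1 rfl
      exact ⟨t, fun _ => ⟨h1, h2, h3⟩⟩
    · exact ⟨π s, fun hh => absurd hh h⟩
  choose f hf using hex
  have hfd : ∀ x, x ∈ dcl S X → S.ht x ∈ C →
      f x ∈ dcl T Y ∧ T.ht (f x) = S.ht x ∧ π '' cone S X x = cone T Y (f x) :=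
    fun x h1 h2 => hf x ⟨h1, h2⟩
  -- injectivity
  have hinj : ∀ x, x ∈ dcl S X → S.ht x ∈ C → ∀ x', x' ∈ dcl S X → S.ht x' ∈ C →
      f x = f x' → x = x' := by
    intro x h1 h2 x' h1' h2' heq
    obtain ⟨d1, d2, d3⟩ := hfd x h1 h2
    obtain ⟨d1', d2', d3'⟩ := hfd x' h1' h2'
    have hht : S.ht x = S.ht x' := by rw [← d2, ← d2', heq]
    have hcone : cone S X x = cone S X x' := by
      have himg : π '' cone S X x = π '' cone S X x' := by rw [d3, d3', heq]
      exact Set.Subset.antisymm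
        (image_subset_cancel cone_subset cone_subset hπ.injOn himg.le)
        (image_subset_cancel cone_subset cone_subset hπ.injOn himg.ge)
    exact cone_unique hcone h1 hht
  -- tree order preservation
  have htlt : ∀ x, x ∈ dcl S X → S.ht x ∈ C → ∀ x', x' ∈ dcl S X → S.ht x' ∈ C →
      (S.tlt x x' ↔ T.tlt (f x) (f x')) := by
    intro x h1 h2 x' h1' h2'
    obtain ⟨d1, d2, d3⟩ := hfd x h1 h2
    obtain ⟨d1', d2', d3'⟩ := hfd x' h1' h2'
    constructor
    · intro h
      have hsub : cone S X x' ⊆ cone S X x := cone_mono (Or.inr h)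
      have hsub' : cone T Y (f x') ⊆ cone T Y (f x) := by
        rw [← d3, ← d3']; exact Set.image_mono hsub
      obtain ⟨w, hw⟩ := exists_mem_cone d1'
      exact two_below (tle_of_mem_cone (hsub' hw)) (tle_of_mem_cone hw)
        (by rw [d2, d2']; exact S.ht_mono _ _ h)
    · intro h
      have hsub' : cone T Y (f x') ⊆ cone T Y (f x) := cone_mono (Or.inr h)
      have hsub : cone S X x' ⊆ cone S X x := by
        refine image_subset_cancel cone_subset cone_subset hπ.injOn ?_
        rw [d3, d3']; exact hsub'
      obtain ⟨w, hw⟩ := exists_mem_cone h1'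
      refine two_below (tle_of_mem_cone (hsub hw)) (tle_of_mem_cone hw) ?_
      have := T.ht_mono _ _ h
      rw [d2, d2'] at this
      exact this
  -- lex order preservation, forward
  have hfwd : ∀ x, x ∈ dcl S X → S.ht x ∈ C → ∀ x', x' ∈ dcl S X → S.ht x' ∈ C →
      S.llt x x' → T.llt (f x) (f x') := by
    intro x h1 h2 x' h1' h2' hllt
    obtain ⟨d1, d2, d3⟩ := hfd x h1 h2
    obtain ⟨d1', d2', d3'⟩ := hfd x' h1' h2'
    by_cases heq : x = x'
    · exact absurd (heq ▸ hllt) (S.llt_irrefl x)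
    by_cases hc : S.tlt x x'
    · exact T.llt_of_tlt _ _ ((htlt x h1 h2 x' h1' h2').1 hc)
    by_cases hc' : S.tlt x' x
    · exact absurd hllt (fun hh => llt_asymm hh (S.llt_of_tlt _ _ hc'))
    obtain ⟨w, hw⟩ := exists_mem_cone h1
    obtain ⟨w', hw'⟩ := exists_mem_cone h1'
    have lww : S.llt w w' := S.llt_coherent x x' w w' hc hc' heq hllt
      (tle_co hw.2) (tle_co hw'.2)
    have lpp : T.llt (π w) (π w') := (hπiso w hw.1 w' hw'.1).1 lww
    have hπw : π w ∈ cone T Y (f x) := d3 ▸ ⟨w, hw, rfl⟩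
    have hπw' : π w' ∈ cone T Y (f x') := d3' ▸ ⟨w', hw', rfl⟩
    have hfne : f x ≠ f x' := fun hh => heq (hinj x h1 h2 x' h1' h2' hh)
    have hfc : ¬ T.tlt (f x) (f x') := fun hh => hc ((htlt x h1 h2 x' h1' h2').2 hh)
    have hfc' : ¬ T.tlt (f x') (f x) := fun hh => hc' ((htlt x' h1' h2' x h1 h2).2 hh)
    rcases T.llt_total (f x) (f x') with hh | hh | hh
    · exact absurd hh hfne
    · exact hh
    · exact absurd (T.llt_coherent (f x') (f x) (π w') (π w) hfc' hfc (Ne.symm hfne) hh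
        (tle_co (tle_of_mem_cone hπw')) (tle_co (tle_of_mem_cone hπw)))
        (fun hcon => llt_asymm hcon lpp)
  refine ⟨C, hclub, f, ?_, ?_, ?_, ?_⟩
  · rintro x ⟨h1, h2⟩
    obtain ⟨d1, d2, d3⟩ := hfd x h1 h2
    exact ⟨d1, d2 ▸ h2⟩
  · refine ⟨?_, ?_, ?_⟩
    · rintro x ⟨h1, h2⟩
      obtain ⟨d1, d2, d3⟩ := hfd x h1 h2
      exact ⟨d1, d2 ▸ h2⟩
    · rintro x ⟨h1, h2⟩ x' ⟨h1', h2'⟩ heq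
      exact hinj x h1 h2 x' h1' h2' heq
    · rintro t ⟨h1, h2⟩
      obtain ⟨u, hu1, hu2, hu3⟩ := h2.2.2.2.2 t h1 rfl
      have hπρ : π '' (ρ '' cone T Y t) = cone T Y t := by
        ext w
        constructor
        · rintro ⟨v₂, ⟨v, hv, rfl⟩, rfl⟩
          rwa [hinv.2 hv.1]
        · intro hw
          exact ⟨ρ w, ⟨w, hw, rfl⟩, hinv.2 hw.1⟩
      have himg : π '' cone S X u = cone T Y t := by rw [← hu3]; exact hπρ
      have huC : S.ht u ∈ C := hu2 ▸ h2
      obtain ⟨d1, d2, d3⟩ := hfd u hu1 huC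
      have hft : f u = t := by
        refine cone_unique (S := T) (X := Y) ?_ d1 ?_
        · rw [← d3, himg]
        · rw [d2, hu2]
      exact ⟨u, ⟨hu1, huC⟩, hft⟩
  · rintro x ⟨h1, h2⟩ x' ⟨h1', h2'⟩
    refine ⟨htlt x h1 h2 x' h1' h2', ?_⟩
    constructor
    · exact hfwd x h1 h2 x' h1' h2'
    · intro h
      rcases S.llt_total x x' with hh | hh | hh
      · subst hh
        exact absurd h (T.llt_irrefl _)
      · exact hh
      · exact absurd h (fun hcon => llt_asymm hcon (hfwd x' h1' h2' x h1 h2 hh))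
  · rintro x ⟨h1, h2⟩
    exact (hfd x h1 h2).2.2
end
end
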